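/- arXiv:1403.0303 — 11 statements merged into one kernel-verified Lean document; each statement's English description precedes it below -/
import Mathlib

section
/- The number of m/n-parking functions equals m^(n-1), where an m/n-parking function is a function f from {1,...,n} to the nonnegative integers such that for every positive integer ℓ ≤ m, the number of indices k with f(k) < ℓ is at least ℓn/m. Here m and n are coprime positive integers. -/
/-- An `m/n`-parking function: `f : {1,…,n} → ℤ≥0` such that for every positive
integer `ℓ ≤ m`, the number of indices `k` with `f k < ℓ` is at least `ℓ·n/m`. -/
def IsParkingFn (m n : ℕ) (f : Fin n → ℕ) : Prop :=
  ∀ ℓ : ℕ, 0 < ℓ → ℓ ≤ m → ℓ * n ≤ m * {k : Fin n | f k < ℓ}.ncard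

open Finset

section Aux

variable (m n : ℕ) [NeZero m]
set_option linter.unusedSectionVars false

/-- number of indices with value `j` mod `m`. -/
def cnt (g : Fin n → ZMod m) (j : ℕ) : ℕ :=
  (univ.filter (fun k => g k = (j : ZMod m))).card

/-- partial sums of `m * cnt - n`. -/
def Ssum (g : Fin n → ZMod m) (ℓ : ℕ) : ℤ :=
  ∑ i ∈ Finset.range ℓ, ((m : ℤ) * cnt m n g i - n)

variable {m n}

lemma cnt_add_m (g : Fin n → ZMod m) (i : ℕ) : cnt m n g (i + m) = cnt m n g i := by
  unfold cnt
  norm_num [Nat.cast_add, ZMod.natCast_self]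

lemma sum_cnt (g : Fin n → ZMod m) : ∑ i ∈ Finset.range m, cnt m n g i = n := by
  have key : ∀ k : Fin n, ∀ i, i < m → (g k = (i : ZMod m) ↔ (g k).val = i) := by
    intro k i hi
    constructor
    · intro h; rw [h, ZMod.val_cast_of_lt hi]
    · intro h; rw [← h, ZMod.natCast_val, ZMod.cast_id]
  calc ∑ i ∈ Finset.range m, cnt m n g i
      = ∑ i ∈ Finset.range m, (univ.filter fun k => (g k).val = i).card := by
        refine Finset.sum_congr rfl fun i hi => ?_
        unfold cnt; congr 1; ext k
        simp [key k i (Finset.mem_range.1 hi)]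
    _ = (univ : Finset (Fin n)).card :=
        (Finset.card_eq_sum_card_fiberwise (fun k _ => Finset.mem_range.2 (ZMod.val_lt (g k)))).symm
    _ = n := by simp

lemma Ssum_m (g : Fin n → ZMod m) : Ssum m n g m = 0 := by
  unfold Ssum
  rw [Finset.sum_sub_distrib, ← Finset.mul_sum, ← Nat.cast_sum, sum_cnt g]
  simp

lemma Ssum_add_m (g : Fin n → ZMod m) (a : ℕ) : Ssum m n g (a + m) = Ssum m n g a := by
  induction a with
  | zero => rw [Nat.zero_add, Ssum_m g]; simp [Ssum]
  | succ a ih =>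
      have h1 : Ssum m n g (a + 1 + m) = Ssum m n g (a + m) + ((m:ℤ) * cnt m n g (a + m) - n) := by
        rw [show a + 1 + m = (a + m) + 1 by omega]
        unfold Ssum; rw [Finset.sum_range_succ]
      have h2 : Ssum m n g (a + 1) = Ssum m n g a + ((m:ℤ) * cnt m n g a - n) := by
        unfold Ssum; rw [Finset.sum_range_succ]
      rw [h1, h2, ih, cnt_add_m]

lemma Ssum_mod (g : Fin n → ZMod m) (a : ℕ) : Ssum m n g a = Ssum m n g (a % m) := by
  induction a using Nat.strong_induction_on with
  | _ a ih =>
    rcases lt_or_ge a m with h | h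
    · rw [Nat.mod_eq_of_lt h]
    · have h1 : a = (a - m) + m := by omega
      rw [h1, Ssum_add_m, ih (a - m) (by have := NeZero.pos m; omega),
        Nat.add_mod_right]

lemma dvd_Ssum (g : Fin n → ZMod m) (a : ℕ) : (m : ℤ) ∣ Ssum m n g a + a * n := by
  induction a with
  | zero => simp [Ssum]
  | succ a ih =>
      have h2 : Ssum m n g (a + 1) = Ssum m n g a + ((m:ℤ) * cnt m n g a - n) := by
        unfold Ssum; rw [Finset.sum_range_succ]
      rw [h2]
      push_cast
      have : Ssum m n g a + ((m:ℤ) * cnt m n g a - n) + (a + 1) * n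
          = (Ssum m n g a + a * n) + m * cnt m n g a := by ring
      rw [this]
      exact dvd_add ih ⟨_, rfl⟩

lemma Ssum_injOn (hcop : Nat.Coprime m n) (g : Fin n → ZMod m) {a b : ℕ}
    (ha : a < m) (hb : b < m) (h : Ssum m n g a = Ssum m n g b) : a = b := by
  have h1 := dvd_Ssum g a
  have h2 := dvd_Ssum g b
  rw [h] at h1
  have h3 : (m : ℤ) ∣ (a - b) * n := by
    have := dvd_sub h1 h2
    have e : Ssum m n g b + a * n - (Ssum m n g b + b * n) = ((a:ℤ) - b) * n := by ring
    rwa [e] at this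
  have h4 : (m : ℤ) ∣ ((a:ℤ) - b) := by
    have : IsCoprime (m : ℤ) (n : ℤ) := Int.isCoprime_iff_gcd_eq_one.2 (by exact_mod_cast hcop)
    exact this.dvd_of_dvd_mul_right h3
  rcases le_total a b with hab | hab
  · have h5 : (m : ℤ) ∣ ((b - a : ℕ) : ℤ) := by
      have e : ((b - a : ℕ) : ℤ) = -((a:ℤ) - b) := by push_cast [hab]; ring
      rw [e]; exact h4.neg_right
    have h6 : m ∣ b - a := by exact_mod_cast h5
    have := Nat.eq_zero_of_dvd_of_lt h6 (by omega)
    omega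
  · have h5 : (m : ℤ) ∣ ((a - b : ℕ) : ℤ) := by
      have e : ((a - b : ℕ) : ℤ) = (a:ℤ) - b := by push_cast [hab]; ring
      rw [e]; exact h4
    have h6 : m ∣ a - b := by exact_mod_cast h5
    have := Nat.eq_zero_of_dvd_of_lt h6 (by omega)
    omega

lemma card_window (g : Fin n → ZMod m) (c ℓ : ℕ) (hℓ : ℓ ≤ m) :
    (m : ℤ) * (univ.filter fun k => (g k - (c : ZMod m)).val < ℓ).card
      = Ssum m n g (c + ℓ) - Ssum m n g c + ℓ * n := by
  have hsplit : (univ.filter fun k => (g k - (c : ZMod m)).val < ℓ)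
      = (Finset.range ℓ).biUnion (fun i => univ.filter fun k => g k = ((c + i : ℕ) : ZMod m)) := by
    ext k
    simp only [Finset.mem_filter, Finset.mem_biUnion, Finset.mem_range, Finset.mem_univ,
      true_and]
    constructor
    · intro h
      refine ⟨(g k - (c : ZMod m)).val, h, ?_⟩
      push_cast
      rw [ZMod.natCast_val, ZMod.cast_id]
      ring
    · rintro ⟨i, hi, hk⟩
      have : g k - (c : ZMod m) = (i : ZMod m) := by rw [hk]; push_cast; ring
      rw [this, ZMod.val_cast_of_lt (lt_of_lt_of_le hi hℓ)]
      exact hi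
  have hdisj : ∀ i ∈ Finset.range ℓ, ∀ j ∈ Finset.range ℓ, i ≠ j →
      Disjoint (univ.filter fun k => g k = ((c + i : ℕ) : ZMod m))
               (univ.filter fun k => g k = ((c + j : ℕ) : ZMod m)) := by
    intro i hi j hj hij
    rw [Finset.mem_range] at hi hj
    have : ((c + i : ℕ) : ZMod m) ≠ ((c + j : ℕ) : ZMod m) := by
      intro h
      have h2 : ((i : ℕ) : ZMod m) = ((j : ℕ) : ZMod m) := by
        push_cast at h ⊢
        exact add_left_cancel h
      have := congrArg ZMod.val h2
      rw [ZMod.val_cast_of_lt (lt_of_lt_of_le hi hℓ),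
        ZMod.val_cast_of_lt (lt_of_lt_of_le hj hℓ)] at this
      exact hij this
    rw [Finset.disjoint_left]
    intro k hk1 hk2
    simp only [Finset.mem_filter] at hk1 hk2
    exact this (hk1.2.symm.trans hk2.2)
  have hcard : (univ.filter fun k => (g k - (c : ZMod m)).val < ℓ).card
      = ∑ i ∈ Finset.range ℓ, cnt m n g (c + i) := by
    rw [hsplit, Finset.card_biUnion hdisj]; rfl
  have hS : Ssum m n g (c + ℓ) = Ssum m n g c + ∑ i ∈ Finset.range ℓ, ((m:ℤ) * cnt m n g (c + i) - n) := by
    unfold Ssum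
    rw [Finset.sum_range_add]
  rw [hcard, hS]
  push_cast
  rw [Finset.sum_sub_distrib, ← Finset.mul_sum]
  simp

lemma exists_min (g : Fin n → ZMod m) :
    ∃ c, c < m ∧ ∀ a, Ssum m n g c ≤ Ssum m n g a := by
  obtain ⟨c, hc, hmin⟩ := Finset.exists_min_image (Finset.range m) (Ssum m n g)
    ⟨0, Finset.mem_range.2 (NeZero.pos m)⟩
  refine ⟨c, Finset.mem_range.1 hc, fun a => ?_⟩
  rw [Ssum_mod g a]
  exact hmin _ (Finset.mem_range.2 (Nat.mod_lt _ (NeZero.pos m)))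

/-- the unique global minimizer of `Ssum g` in `[0, m)`. -/
noncomputable def cmin (g : Fin n → ZMod m) : ℕ := (exists_min g).choose

lemma cmin_lt (g : Fin n → ZMod m) : cmin g < m := (exists_min g).choose_spec.1

lemma cmin_min (g : Fin n → ZMod m) (a : ℕ) : Ssum m n g (cmin g) ≤ Ssum m n g a :=
  (exists_min g).choose_spec.2 a

lemma cmin_eq (hcop : Nat.Coprime m n) (g : Fin n → ZMod m) {c : ℕ} (hc : c < m)
    (hmin : ∀ a, Ssum m n g c ≤ Ssum m n g a) : cmin g = c :=
  Ssum_injOn hcop g (cmin_lt g) hc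
    (le_antisymm (cmin_min g c) (hmin (cmin g)))

lemma ncard_eq_card (p : Fin n → Prop) [DecidablePred p] :
    {k : Fin n | p k}.ncard = (univ.filter p).card := by
  rw [Set.ncard_eq_toFinset_card']
  simp

lemma parking_lt {f : Fin n → ℕ} (hf : IsParkingFn m n f) (k : Fin n) : f k < m := by
  have h := hf m (NeZero.pos m) le_rfl
  rw [ncard_eq_card (fun k => f k < m)] at h
  have h2 : n ≤ (univ.filter fun k => f k < m).card :=
    Nat.le_of_mul_le_mul_left (by linarith [h]) (NeZero.pos m)
  have h3 : (univ.filter fun k => f k < m) = univ := by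
    apply Finset.eq_univ_of_card
    refine le_antisymm ?_ (by simpa using h2)
    simpa using Finset.card_filter_le univ (fun k => f k < m)
  have := Finset.mem_filter.1 (h3 ▸ Finset.mem_univ k)
  exact this.2

lemma toParking (g : Fin n → ZMod m) :
    IsParkingFn m n (fun k => (g k - ((cmin g : ℕ) : ZMod m)).val) := by
  intro ℓ hℓ0 hℓm
  rw [ncard_eq_card (fun k => (g k - ((cmin g : ℕ) : ZMod m)).val < ℓ)]
  have hw := card_window g (cmin g) ℓ hℓm
  have hmin := cmin_min g (cmin g + ℓ)
  have : (ℓ * n : ℤ) ≤ (m : ℤ) * (univ.filter fun k => (g k - ((cmin g : ℕ) : ZMod m)).val < ℓ).card := by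
    rw [hw]; linarith
  exact_mod_cast this

lemma shift_eq {f : Fin n → ℕ} (hf : IsParkingFn m n f) (c : ZMod m) (k : Fin n) :
    ((f k : ZMod m) + c - ((c.val : ℕ) : ZMod m)).val = f k := by
  rw [ZMod.natCast_val, ZMod.cast_id]
  rw [add_sub_cancel_right, ZMod.val_cast_of_lt (parking_lt hf k)]

lemma shift_min {f : Fin n → ℕ} (hf : IsParkingFn m n f) (c : ZMod m) :
    ∀ a, Ssum m n (fun k => (f k : ZMod m) + c) c.val ≤ Ssum m n (fun k => (f k : ZMod m) + c) a := by
  set g : Fin n → ZMod m := fun k => (f k : ZMod m) + c with hg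
  have step : ∀ ℓ, ℓ ≤ m → Ssum m n g c.val ≤ Ssum m n g (c.val + ℓ) := by
    intro ℓ hℓm
    rcases Nat.eq_zero_or_pos ℓ with h0 | hℓ0
    · simp [h0]
    have hw := card_window g c.val ℓ hℓm
    have hfilter : (univ.filter fun k => (g k - ((c.val : ℕ) : ZMod m)).val < ℓ)
        = univ.filter (fun k => f k < ℓ) := by
      apply Finset.filter_congr
      intro k _
      rw [hg]
      simp only [shift_eq hf c k]
    rw [hfilter] at hw
    have hp := hf ℓ hℓ0 hℓm
    rw [ncard_eq_card (fun k => f k < ℓ)] at hp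
    have hp' : (ℓ * n : ℤ) ≤ (m : ℤ) * (univ.filter fun k => f k < ℓ).card := by exact_mod_cast hp
    linarith
  intro a
  set ℓ := (a + m - c.val) % m with hℓ
  have hcv := ZMod.val_lt c
  have hmod : (c.val + ℓ) % m = a % m := by
    have h1 : c.val + ℓ ≡ c.val + (a + m - c.val) [MOD m] :=
      Nat.ModEq.add_left _ (Nat.mod_modEq _ _)
    have h2 : c.val + (a + m - c.val) = a + m := by omega
    have h3 : a + m ≡ a [MOD m] := by
      simpa using (Nat.modEq_iff_dvd' (by omega)).2 ⟨1, by omega⟩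
    have h4 : c.val + (a + m - c.val) ≡ a [MOD m] := by rw [h2]; exact h3
    exact h1.trans h4
  calc Ssum m n g c.val ≤ Ssum m n g (c.val + ℓ) :=
        step ℓ (le_of_lt (Nat.mod_lt _ (NeZero.pos m)))
    _ = Ssum m n g a := by
        rw [Ssum_mod g (c.val + ℓ), hmod, ← Ssum_mod g a]

end Aux

/-- The number of `m/n`-parking functions equals `m^(n-1)` for coprime `m`, `n`. -/
theorem stmt_0 (m n : ℕ) (hm : 0 < m) (hn : 0 < n) (hcop : Nat.Coprime m n) :
    Nat.card {f : Fin n → ℕ // IsParkingFn m n f} = m ^ (n - 1) := by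
  haveI : NeZero m := ⟨hm.ne'⟩
  set F : (Fin n → ZMod m) → {f : Fin n → ℕ // IsParkingFn m n f} × ZMod m :=
    fun g => (⟨fun k => (g k - ((cmin g : ℕ) : ZMod m)).val, toParking g⟩,
      ((cmin g : ℕ) : ZMod m)) with hF
  have hbij : Function.Bijective F := by
    constructor
    · intro g₁ g₂ h
      rw [Prod.ext_iff] at h
      obtain ⟨h1, h2⟩ := h
      simp only [hF] at h1 h2
      rw [Subtype.ext_iff] at h1
      funext k
      have h3 := congrFun h1 k
      simp only at h3
      have h4 : g₁ k - ((cmin g₁ : ℕ) : ZMod m) = g₂ k - ((cmin g₂ : ℕ) : ZMod m) :=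
        ZMod.val_injective _ h3
      have := congrArg (· + ((cmin g₁ : ℕ) : ZMod m)) h4
      simp only [sub_add_cancel] at this
      rw [this, h2]
      ring
    · rintro ⟨⟨f, hf⟩, c⟩
      refine ⟨fun k => (f k : ZMod m) + c, ?_⟩
      have hc : cmin (fun k => (f k : ZMod m) + c) = c.val :=
        cmin_eq hcop _ (ZMod.val_lt c) (shift_min hf c)
      simp only [hF, hc]
      refine Prod.ext ?_ ?_
      · apply Subtype.ext
        funext k
        exact shift_eq hf c k
      · simp only
        rw [ZMod.natCast_val, ZMod.cast_id]
  have hcard := Nat.card_eq_of_bijective F hbij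
  rw [Nat.card_prod] at hcard
  have h1 : Nat.card (Fin n → ZMod m) = m ^ n := by
    rw [Nat.card_eq_fintype_card, Fintype.card_fun]
    simp [ZMod.card]
  have h2 : Nat.card (ZMod m) = m := by
    rw [Nat.card_eq_fintype_card, ZMod.card]
  rw [h1, h2] at hcard
  have h3 : m ^ n = m ^ (n - 1) * m := by
    rw [← pow_succ]
    congr 1
    omega
  rw [h3] at hcard
  exact Nat.eq_of_mul_eq_mul_right hm hcard.symm
end

section
/- The map ω ↦ ω*(x) := 1 - ω(1-x) is an involution on affine permutations that preserves the set of m-stable affine permutations; moreover (i,j) ↦ (1-j, 1-i) is a height-preserving bijection from the set of pairs i<j with ω(i)>ω(j) to the set of pairs i<j with ω*(i)>ω*(j). -/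
/-- The star involution `ω*(x) = 1 - ω(1-x)` maps affine permutations to affine
permutations, is an involution, preserves `m`-stability, and
`(i,j) ↦ (1-j, 1-i)` is a height-preserving bijection between inversion sets. -/
theorem stmt_4 (n m : ℕ) (hn : 0 < n) (hm : 0 < m) (ω : ℤ → ℤ)
    (hbij : Function.Bijective ω)
    (hper : ∀ x : ℤ, ω (x + n) = ω x + n)
    (hsum : 2 * ∑ i ∈ Finset.Icc (1 : ℤ) (n : ℤ), ω i = n * (n + 1)) :
    Function.Bijective (fun x : ℤ => 1 - ω (1 - x)) ∧
    (∀ x : ℤ, (1 - ω (1 - (x + n))) = (1 - ω (1 - x)) + n) ∧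
    (2 * ∑ i ∈ Finset.Icc (1 : ℤ) (n : ℤ), (1 - ω (1 - i)) = n * (n + 1)) ∧
    (∀ x : ℤ, 1 - (1 - ω (1 - (1 - x))) = ω x) ∧
    ((∀ x : ℤ, ω x < ω (x + m)) →
      ∀ x : ℤ, (1 - ω (1 - x)) < (1 - ω (1 - (x + m)))) ∧
    Set.BijOn (fun p : ℤ × ℤ => (1 - p.2, 1 - p.1))
      {p : ℤ × ℤ | p.1 < p.2 ∧ ω p.2 < ω p.1}
      {p : ℤ × ℤ | p.1 < p.2 ∧ (1 - ω (1 - p.2)) < (1 - ω (1 - p.1))} ∧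
    (∀ p : ℤ × ℤ, (1 - p.1) - (1 - p.2) = p.2 - p.1) := by
  have hinj := hbij.1
  refine ⟨?_, ?_, ?_, ?_, ?_, ?_, ?_⟩
  · constructor
    · intro a b hab
      simp only at hab
      have : ω (1 - a) = ω (1 - b) := by linarith
      have := hinj this
      linarith
    · intro y
      obtain ⟨x, hx⟩ := hbij.2 (1 - y)
      exact ⟨1 - x, by simp [hx]⟩
  · intro x
    have h := hper (1 - x - n)
    have : (1 - x - (n:ℤ)) + n = 1 - x := by ring
    rw [this] at h
    have : (1 : ℤ) - (x + n) = 1 - x - n := by ring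
    rw [this]
    linarith
  · -- sum identity
    have key : ∑ i ∈ Finset.Icc (1 : ℤ) (n : ℤ), ω (1 - i)
        = (∑ i ∈ Finset.Icc (1 : ℤ) (n : ℤ), ω i) - n * n := by
      have h1 : ∀ i ∈ Finset.Icc (1 : ℤ) (n : ℤ), ω (1 - i) = ω ((n:ℤ) + 1 - i) - n := by
        intro i _
        have := hper (1 - i)
        have e : (1 : ℤ) - i + n = (n:ℤ) + 1 - i := by ring
        rw [e] at this
        linarith
      rw [Finset.sum_congr rfl h1, Finset.sum_sub_distrib, Finset.sum_const]
      have hcard : (Finset.Icc (1 : ℤ) (n : ℤ)).card = n := by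
        rw [Int.card_Icc]; simp
      rw [hcard]
      have h2 : ∑ i ∈ Finset.Icc (1 : ℤ) (n : ℤ), ω ((n:ℤ) + 1 - i)
          = ∑ i ∈ Finset.Icc (1 : ℤ) (n : ℤ), ω i := by
        apply Finset.sum_nbij' (fun i => (n:ℤ) + 1 - i) (fun i => (n:ℤ) + 1 - i)
        · intro a ha; simp only [Finset.mem_Icc] at *; omega
        · intro a ha; simp only [Finset.mem_Icc] at *; omega
        · intro a _; ring
        · intro a _; ring
        · intro a _; rfl
      rw [h2]; push_cast; ring
    rw [Finset.sum_sub_distrib, Finset.sum_const, key]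
    have hcard : (Finset.Icc (1 : ℤ) (n : ℤ)).card = n := by
      rw [Int.card_Icc]; simp
    rw [hcard]
    simp only [nsmul_eq_mul, mul_one]
    push_cast
    linarith
  · intro x; simp
  · intro hst x
    have := hst (1 - x - m)
    have e : (1 : ℤ) - x - m + m = 1 - x := by ring
    rw [e] at this
    have e2 : (1 : ℤ) - (x + m) = 1 - x - m := by ring
    rw [e2]
    linarith
  · refine ⟨?_, ?_, ?_⟩
    · rintro ⟨a, b⟩ ⟨h1, h2⟩
      refine ⟨by simpa using by linarith, ?_⟩
      simp only
      have e1 : (1 : ℤ) - (1 - a) = a := by ring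
      have e2 : (1 : ℤ) - (1 - b) = b := by ring
      rw [e1, e2]
      linarith
    · rintro ⟨a, b⟩ _ ⟨c, d⟩ _ h
      simp only [Prod.mk.injEq] at h
      have : b = d := by linarith [h.1]
      have : a = c := by linarith [h.2]
      simp_all
    · rintro ⟨a, b⟩ ⟨h1, h2⟩
      simp only at h1 h2
      refine ⟨(1 - b, 1 - a), ⟨by simp only; linarith, by simp only; linarith⟩, by simp⟩
  · intro p; ring
end

section
/- For m = kn+r with 0 < r < n coprime to n, let c = (m-1)(n+1)/2 and let ω_m be the affine permutation with ω_m(i) = mi - c for 1 ≤ i ≤ n (extended by ω_m(x+n) = ω_m(x)+n). Then ω_m is a well-defined affine permutation (in particular Σ_{i=1}^n ω_m(i) = n(n+1)/2), and ω_m is m-restricted, i.e., for all i < j, ω_m(i) - ω_m(j) ≠ m. -/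
lemma gauss_int : ∀ N : ℤ, 0 ≤ N → 2 * ∑ i ∈ Finset.Icc (1 : ℤ) N, i = N * (N + 1) := by
  refine fun N hN => Int.le_induction (motive := fun N _ => 2 * ∑ i ∈ Finset.Icc (1:ℤ) N, i = N * (N + 1)) ?_ ?_ N hN
  · simp
  · intro N hN ih
    have hins : Finset.Icc (1:ℤ) (N+1) = insert (N+1) (Finset.Icc 1 N) := by
      ext x; simp only [Finset.mem_Icc, Finset.mem_insert]; omega
    rw [hins, Finset.sum_insert (by simp only [Finset.mem_Icc]; omega)]
    ring_nf; ring_nf at ih; linarith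

/-- For `m = kn + r` with `0 < r < n` and `m` coprime to `n`, with
`c = (m-1)(n+1)/2`, the map `ω_m` given by `ω_m(i) = m·i - c` for `1 ≤ i ≤ n`,
extended `n`-periodically, is a well-defined affine permutation
(in particular `Σ_{i=1}^n ω_m(i) = n(n+1)/2`) and is `m`-restricted:
for all `i < j`, `ω_m(i) - ω_m(j) ≠ m`. -/
theorem stmt_5 (n m k r c : ℤ) (hn : 2 ≤ n) (hm : 0 < m)
    (hcop : IsCoprime m n) (hmkr : m = k * n + r) (hr0 : 0 < r) (hrn : r < n)
    (hc : 2 * c = (m - 1) * (n + 1))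
    (ωm : ℤ → ℤ)
    (hωm : ∀ x : ℤ, ωm x = m * ((x - 1) % n + 1) - c + ((x - 1) / n) * n) :
    Function.Bijective ωm ∧
    (∀ x : ℤ, ωm (x + n) = ωm x + n) ∧
    (2 * ∑ i ∈ Finset.Icc (1 : ℤ) n, ωm i = n * (n + 1)) ∧
    (∀ i j : ℤ, i < j → ωm i - ωm j ≠ m) := by
  have hn0 : (0:ℤ) < n := by omega
  have hnne : n ≠ 0 := by omega
  have hs0 : ∀ x : ℤ, 0 ≤ (x-1) % n := fun x => Int.emod_nonneg _ hnne
  have hsn : ∀ x : ℤ, (x-1) % n < n := fun x => Int.emod_lt_of_pos _ hn0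
  have hdec : ∀ x : ℤ, x - 1 = n * ((x-1)/n) + (x-1) % n :=
    fun x => (Int.mul_ediv_add_emod (x-1) n).symm
  have hcop' : IsCoprime n m := hcop.symm
  constructor
  · constructor
    · -- injective
      intro x y hxy
      rw [hωm x, hωm y] at hxy
      have hdvd : n ∣ ((x-1) % n - (y-1) % n) :=
        hcop'.dvd_of_dvd_mul_left ⟨(y-1)/n - (x-1)/n, by linear_combination hxy⟩
      obtain ⟨t, ht⟩ := hdvd
      have h1 := hs0 x; have h2 := hsn x; have h3 := hs0 y; have h4 := hsn y
      have ht0 : t = 0 := by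
        have hb1 : -n < n * t := by omega
        have hb2 : n * t < n := by omega
        rcases lt_trichotomy t 0 with h | h | h
        · nlinarith
        · exact h
        · nlinarith
      rw [ht0, mul_zero] at ht
      have hseq : (x-1) % n = (y-1) % n := by omega
      have hqeq : (x-1)/n = (y-1)/n := by
        have hq : ((x-1)/n) * n = ((y-1)/n) * n := by linear_combination hxy - m * hseq
        exact mul_right_cancel₀ hnne hq
      have hq' : n * ((x-1)/n) = n * ((y-1)/n) := by rw [hqeq]
      have d1 := hdec x; have d2 := hdec y
      omega
    · -- surjective
      intro y
      obtain ⟨u, v, huv⟩ := hcop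
      set t := u * (y + c) with htdef
      set s := (t - 1) % n with hsdef
      have hs1 : 0 ≤ s := Int.emod_nonneg _ hnne
      have hs2 : s < n := Int.emod_lt_of_pos _ hn0
      have hse : s = t - 1 - n * ((t-1)/n) := by
        have := Int.mul_ediv_add_emod (t-1) n; omega
      have hdvd : n ∣ (y + c - m * (s + 1)) := by
        refine ⟨v * (y + c) + m * ((t-1)/n), ?_⟩
        linear_combination (-m) * hse + (-m) * htdef + (-(y+c)) * huv
      obtain ⟨q, hq⟩ := hdvd
      refine ⟨q * n + s + 1, ?_⟩
      rw [hωm]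
      have e1 : (q * n + s + 1 - 1) % n = s := by
        have h : q * n + s + 1 - 1 = s + n * q := by ring
        rw [h, Int.add_mul_emod_self_left, Int.emod_eq_of_lt hs1 hs2]
      have e2 : (q * n + s + 1 - 1) / n = q := by
        have h : q * n + s + 1 - 1 = s + n * q := by ring
        rw [h, Int.add_mul_ediv_left _ _ hnne, Int.ediv_eq_zero_of_lt hs1 hs2]
        ring
      rw [e1, e2]
      linear_combination -hq
  refine ⟨?_, ?_, ?_⟩
  · -- periodicity
    intro x
    rw [hωm (x+n), hωm x]
    have e1 : (x + n - 1) % n = (x - 1) % n := by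
      have h : x + n - 1 = (x - 1) + n * 1 := by ring
      rw [h, Int.add_mul_emod_self_left]
    have e2 : (x + n - 1) / n = (x - 1) / n + 1 := by
      have h : x + n - 1 = (x - 1) + n * 1 := by ring
      rw [h, Int.add_mul_ediv_left _ _ hnne]
    rw [e1, e2]; ring
  · -- sum
    have key : ∀ i ∈ Finset.Icc (1:ℤ) n, ωm i = m * i - c := by
      intro i hi
      simp only [Finset.mem_Icc] at hi
      rw [hωm]
      have e1 : (i - 1) % n = i - 1 := Int.emod_eq_of_lt (by omega) (by omega)
      have e2 : (i - 1) / n = 0 := Int.ediv_eq_zero_of_lt (by omega) (by omega)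
      rw [e1, e2]; ring
    rw [Finset.sum_congr rfl key, Finset.sum_sub_distrib, ← Finset.mul_sum,
      Finset.sum_const]
    have hcard : (Finset.Icc (1:ℤ) n).card = n.toNat := by
      rw [Int.card_Icc]; omega
    rw [hcard]
    have hg := gauss_int n (by omega)
    have hnt : (n.toNat : ℤ) = n := by omega
    rw [nsmul_eq_mul, hnt]
    nlinarith [hg, hc]
  · -- m-restricted
    intro i j hij hcontra
    rw [hωm i, hωm j] at hcontra
    have hdvd : n ∣ ((i-1) % n - (j-1) % n - 1) :=
      hcop'.dvd_of_dvd_mul_left ⟨(j-1)/n - (i-1)/n, by linear_combination hcontra⟩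
    obtain ⟨t, ht⟩ := hdvd
    have h1 := hs0 i; have h2 := hsn i; have h3 := hs0 j; have h4 := hsn j
    have di := hdec i; have dj := hdec j
    have ht0 : t = 0 ∨ t = -1 := by
      have hb1 : -n ≤ n * t := by omega
      have hb2 : n * t ≤ n - 2 := by omega
      by_contra hcon
      push_neg at hcon
      rcases lt_or_ge t 0 with h | h
      · have : t ≤ -2 := by omega
        nlinarith
      · have : 1 ≤ t := by omega
        nlinarith
    rcases ht0 with h | h
    · -- si = sj + 1, qi = qj: then i = j + 1 > j
      rw [h, mul_zero] at ht
      have h0 : ((j-1)/n - (i-1)/n) * n = 0 := by linear_combination -hcontra + m * ht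
      rcases mul_eq_zero.1 h0 with h' | h'
      · have hq : (i-1)/n = (j-1)/n := by omega
        have hq' : n * ((i-1)/n) = n * ((j-1)/n) := by rw [hq]
        omega
      · omega
    · -- si = 0, sj = n-1, qi = qj + m: then i - j = (m-1)n + 1 > 0
      rw [h] at ht
      have heq : (i-1) % n - (j-1) % n - 1 = -n := by omega
      have h0 : ((j-1)/n - (i-1)/n) * n = (-m) * n := by
        linear_combination -hcontra + m * heq
      have hq : (j-1)/n - (i-1)/n = -m := mul_right_cancel₀ hnne h0
      have hq' : n * ((i-1)/n) = n * ((j-1)/n) + n * m := by linear_combination -n * hq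
      have hnm : n ≤ n * m := le_mul_of_one_le_right (le_of_lt hn0) hm
      omega
end

section
/- The Anderson map A from m-stable affine permutations to m/n-parking functions is a bijection. Explicitly, for ω m-stable let M_ω = min{i : ω(i) > 0}; for each α ∈ {1,...,n} write ω^{-1}(α) - M_ω = rm - kn uniquely with r ∈ {0,...,n-1}; then necessarily k ≥ 0, and A_ω(α) := k defines an m/n-parking function, and ω ↦ A_ω is bijective. -/
/-- Affine permutation of period `n`. -/
def IsAffinePerm (n : ℕ) (ω : ℤ ≃ ℤ) : Prop :=
  (∀ x : ℤ, ω (x + n) = ω x + n) ∧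
  2 * ∑ i ∈ Finset.Icc (1 : ℤ) (n : ℤ), ω i = n * (n + 1)

/-- `m`-stability: no inversions of height `m`. -/
def IsMStable (m : ℕ) (ω : ℤ ≃ ℤ) : Prop := ∀ x : ℤ, ω x < ω (x + m)

namespace AndersonAux

open Finset Function

variable {m n : ℕ}

lemma bezout (hcop : Nat.Coprime m n) :
    (m : ℤ) * Nat.gcdA m n + n * Nat.gcdB m n = 1 := by
  have h := Nat.gcd_eq_gcd_ab m n
  rw [hcop] at h
  push_cast at h
  linarith

/-- the residue `r` in `x = r·m - k·n`, `0 ≤ r < n`. -/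
def rOf (m n : ℕ) (x : ℤ) : ℤ := (x * Nat.gcdA m n) % n

def kOf (m n : ℕ) (x : ℤ) : ℤ := (rOf m n x * m - x) / n

lemma rOf_nonneg (hn : 0 < n) (x : ℤ) : 0 ≤ rOf m n x :=
  Int.emod_nonneg _ (by exact_mod_cast hn.ne')

lemma rOf_lt (hn : 0 < n) (x : ℤ) : rOf m n x < n :=
  Int.emod_lt_of_pos _ (by exact_mod_cast hn)

lemma rOf_kOf_spec (hcop : Nat.Coprime m n) (x : ℤ) :
    x = rOf m n x * m - kOf m n x * n := by
  have hb := bezout hcop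
  have hdvd : (n : ℤ) ∣ rOf m n x * m - x := by
    refine ⟨-x * Nat.gcdB m n - (x * Nat.gcdA m n / n) * m, ?_⟩
    have hr : rOf m n x = x * Nat.gcdA m n - n * (x * Nat.gcdA m n / n) := by
      rw [rOf, Int.emod_def]
    rw [hr]
    linear_combination x * hb
  have := Int.ediv_mul_cancel hdvd
  rw [kOf, this]
  ring

lemma int_cop (hcop : Nat.Coprime m n) : IsCoprime (n : ℤ) (m : ℤ) := by
  rw [Int.isCoprime_iff_gcd_eq_one]
  simpa [Int.gcd, Nat.coprime_comm] using hcop.symm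

lemma small_mul_zero (hn : 0 < n) {a : ℤ} (h : (n : ℤ) ∣ a)
    (h1 : -(n : ℤ) < a) (h2 : a < n) : a = 0 := by
  rcases h with ⟨c, hc⟩
  rcases lt_trichotomy c 0 with h' | h' | h'
  · nlinarith
  · simp [h'] at hc; omega
  · nlinarith

lemma dvd_range_cases (hn : 0 < n) {d : ℤ} (h : (n : ℤ) ∣ d)
    (h1 : -(n:ℤ) ≤ d) (h2 : d ≤ (n:ℤ) - 2) : d = 0 ∨ d = -(n:ℤ) := by
  obtain ⟨e, he⟩ := h
  have hnZ : (0:ℤ) < n := by exact_mod_cast hn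
  rcases lt_trichotomy e 0 with h' | h' | h'
  · by_cases he2 : e = -1
    · right; rw [he, he2]; ring
    · exfalso
      have hle : e ≤ -2 := by omega
      have h3 : (n:ℤ) * e ≤ n * (-2) := mul_le_mul_of_nonneg_left hle hnZ.le
      rw [he] at h1
      linarith
  · left; rw [he, h']; ring
  · exfalso
    have h3 : (n:ℤ) * 1 ≤ n * e := mul_le_mul_of_nonneg_left (by omega) hnZ.le
    rw [he] at h2
    linarith

lemma decomp_unique (hn : 0 < n) (hcop : Nat.Coprime m n) {r₁ k₁ r₂ k₂ : ℤ}
    (h : r₁ * m - k₁ * n = r₂ * m - k₂ * n)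
    (h10 : 0 ≤ r₁) (h1n : r₁ < n) (h20 : 0 ≤ r₂) (h2n : r₂ < n) :
    r₁ = r₂ ∧ k₁ = k₂ := by
  have hdvd : (n : ℤ) ∣ (r₁ - r₂) * m := ⟨k₁ - k₂, by linarith⟩
  have hdvd' : (n : ℤ) ∣ r₁ - r₂ := (int_cop hcop).dvd_of_dvd_mul_right hdvd
  have hr : r₁ = r₂ := by
    have := small_mul_zero hn hdvd' (by omega) (by omega)
    omega
  refine ⟨hr, ?_⟩
  subst hr
  have : (k₁ - k₂) * n = 0 := by linarith
  have hn' : (n : ℤ) ≠ 0 := by exact_mod_cast hn.ne'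
  have := mul_eq_zero.mp this
  omega

/-- period extension -/
lemma per_mul {ω : ℤ ≃ ℤ} (hper : ∀ x : ℤ, ω (x + n) = ω x + n) (x c : ℤ) :
    ω (x + c * n) = ω x + c * n := by
  induction c using Int.induction_on with
  | zero => simp
  | succ k ih =>
      have h : x + (k + 1) * n = (x + k * n) + n := by ring
      rw [h, hper, ih]; ring
  | pred k ih =>
      have h1 : (x + (-k - 1) * n) + n = x + (-k) * n := by ring
      have h2 := hper (x + (-k - 1) * n)
      rw [h1] at h2
      have h3 : ω (x + (-k-1) * n) = ω (x + (-k) * n) - n := by omega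
      rw [h3, ih]; ring

lemma per_symm {ω : ℤ ≃ ℤ} (hper : ∀ x : ℤ, ω (x + n) = ω x + n) (x c : ℤ) :
    ω.symm (x + c * n) = ω.symm x + c * n := by
  apply ω.injective
  rw [Equiv.apply_symm_apply, per_mul hper, Equiv.apply_symm_apply]

lemma window_sum : 2 * ∑ i ∈ Icc (1 : ℤ) (n : ℤ), i = n * (n + 1) := by
  induction n with
  | zero => simp
  | succ k ih =>
      have h : Icc (1 : ℤ) ((k+1 : ℕ) : ℤ) = insert ((k : ℤ)+1) (Icc (1:ℤ) (k:ℤ)) := by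
        ext x; simp only [Finset.mem_Icc, Finset.mem_insert]; push_cast; omega
      rw [h, Finset.sum_insert (by simp)]
      push_cast
      push_cast at ih
      ring_nf
      ring_nf at ih
      linarith

lemma key_ineq (hn : 0 < n) {a b : ℤ} {x y : ℤ} (hx0 : 0 ≤ x) (hxn : x < n)
    (hy0 : 0 ≤ y) (hyn : y < n) :
    a * n + x < b * n + y ↔ (a < b ∨ (a = b ∧ x < y)) := by
  have hn' : (0:ℤ) ≤ n := by exact_mod_cast hn.le
  constructor
  · intro h
    rcases lt_trichotomy a b with h' | h' | h'
    · exact Or.inl h'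
    · exact Or.inr ⟨h', by subst h'; linarith⟩
    · exfalso
      have h1 : b + 1 ≤ a := by omega
      have h2 : (b + 1) * (n:ℤ) ≤ a * n := mul_le_mul_of_nonneg_right h1 hn'
      linarith
  · rintro (h' | ⟨rfl, h'⟩)
    · have h1 : a + 1 ≤ b := by omega
      have h2 : (a + 1) * (n:ℤ) ≤ b * n := mul_le_mul_of_nonneg_right h1 hn'
      linarith
    · linarith

lemma ncard_eq (P : Fin n → Prop) [DecidablePred P] :
    {k : Fin n | P k}.ncard = (univ.filter P).card := by
  rw [Set.ncard_eq_toFinset_card', Set.toFinset_setOf]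

lemma fin_sum2 (hn : 0 < n) : 2 * ∑ j : Fin n, (j : ℤ) = n * (n - 1) := by
  have h1 : ∑ j : Fin n, (j : ℤ) = ∑ i ∈ range n, (i : ℤ) :=
    Fin.sum_univ_eq_sum_range (fun i => (i : ℤ)) n
  have h3 := Finset.sum_range_id_mul_two n
  have h4 : (((∑ i ∈ range n, i) * 2 : ℕ) : ℤ) = ((n * (n - 1) : ℕ) : ℤ) := by rw [h3]
  push_cast [Nat.cast_sub (by omega : 1 ≤ n)] at h4
  rw [h1]
  linarith

/-! ### rank machinery -/

/-- rank of `α` in the order given by `key`. -/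
def Rk (key : Fin n → ℤ) (α : Fin n) : ℤ :=
  ((univ.filter fun β => key β < key α).card : ℤ)

lemma Rk_nonneg (key : Fin n → ℤ) (α : Fin n) : 0 ≤ Rk key α := Int.natCast_nonneg _

lemma Rk_lt_n (key : Fin n → ℤ) (α : Fin n) : Rk key α < n := by
  have h : (univ.filter fun β => key β < key α) ⊂ univ := by
    refine Finset.ssubset_univ_iff.mpr ?_
    intro heq
    have : α ∈ univ.filter fun β => key β < key α := by rw [heq]; exact mem_univ α
    simp at this
  have := Finset.card_lt_card h
  rw [Finset.card_univ, Fintype.card_fin] at this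
  simp only [Rk]
  exact_mod_cast this

lemma Rk_mono (key : Fin n → ℤ) {α β : Fin n} (h : key α < key β) :
    Rk key α < Rk key β := by
  have hss : (univ.filter fun γ => key γ < key α) ⊂ (univ.filter fun γ => key γ < key β) := by
    refine Finset.ssubset_iff_of_subset ?_ |>.mpr ⟨α, by simp [h], by simp⟩
    intro γ hγ
    simp only [mem_filter, mem_univ, true_and] at hγ ⊢
    omega
  have := Finset.card_lt_card hss
  simp only [Rk]
  exact_mod_cast this

lemma Rk_inj (key : Fin n → ℤ) (hkey : Injective key) : Injective (Rk key) := by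
  intro α β h
  rcases lt_trichotomy (key α) (key β) with h' | h' | h'
  · exact absurd h (Rk_mono key h').ne
  · exact hkey h'
  · exact absurd h.symm (Rk_mono key h').ne

lemma Rk_lt_iff (key : Fin n → ℤ) (hkey : Injective key) {α β : Fin n} :
    Rk key α < Rk key β ↔ key α < key β := by
  constructor
  · intro h
    rcases lt_trichotomy (key α) (key β) with h' | h' | h'
    · exact h'
    · exact absurd (hkey h') (by rintro rfl; exact lt_irrefl _ h)
    · exact absurd (Rk_mono key h') (by omega)
  · exact Rk_mono key

/-- any injective `ρ : Fin n → ℤ` with values in `[0,n)` sums to `0+1+⋯+(n-1)`. -/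
lemma sum_inj_range (ρ : Fin n → ℤ) (hinj : Injective ρ)
    (h0 : ∀ α, 0 ≤ ρ α) (h1 : ∀ α, ρ α < n) :
    ∑ α, ρ α = ∑ j : Fin n, (j : ℤ) := by
  have hlt : ∀ α, (ρ α).toNat < n := fun α => by
    have := h1 α; have := h0 α; omega
  set ρ' : Fin n → Fin n := fun α => ⟨(ρ α).toNat, hlt α⟩ with hρ'
  have hinj' : Injective ρ' := by
    intro α β h
    apply hinj
    have := congrArg Fin.val h
    simp only [hρ'] at this
    have h0α := h0 α; have h0β := h0 β
    omega
  have hbij : Bijective ρ' := Finite.injective_iff_bijective.mp hinj'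
  have := Fintype.sum_bijective ρ' hbij (fun α => ((ρ' α : ℕ) : ℤ)) (fun j => (j : ℤ))
    (fun α => rfl)
  calc ∑ α, ρ α = ∑ α, ((ρ' α : ℕ) : ℤ) := by
        apply Finset.sum_congr rfl
        intro α _
        simp only [hρ']
        have := h0 α; omega
    _ = ∑ j : Fin n, (j : ℤ) := this

lemma rank_surj (key : Fin n → ℤ) (hkey : Injective key) {c : ℤ} (h0 : 0 ≤ c) (h1 : c < n) :
    ∃ α, Rk key α = c := by
  have hlt : ∀ α, (Rk key α).toNat < n := fun α => by
    have := Rk_lt_n key α; have := Rk_nonneg key α; omega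
  set ρ' : Fin n → Fin n := fun α => ⟨(Rk key α).toNat, hlt α⟩ with hρ'
  have hinj' : Injective ρ' := by
    intro α β h
    apply Rk_inj key hkey
    have := congrArg Fin.val h
    simp only [hρ'] at this
    have := Rk_nonneg key α; have := Rk_nonneg key β
    omega
  have hsurj := (Finite.injective_iff_surjective.mp hinj')
  obtain ⟨α, hα⟩ := hsurj ⟨c.toNat, by omega⟩
  refine ⟨α, ?_⟩
  have := congrArg Fin.val hα
  simp only [hρ'] at this
  have := Rk_nonneg key α
  omega

/-- key increases along `ρ`-chains. -/
lemma chain_mono (key ρ : Fin n → ℤ) (hinj : Injective ρ)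
    (h0 : ∀ α, 0 ≤ ρ α) (h1 : ∀ α, ρ α < n)
    (hstep : ∀ α β, ρ α = ρ β + 1 → key β < key α) :
    ∀ α β, ρ β < ρ α → key β < key α := by
  have hsurj : ∀ c : ℤ, 0 ≤ c → c < n → ∃ α, ρ α = c := by
    have hlt : ∀ α, (ρ α).toNat < n := fun α => by have := h1 α; have := h0 α; omega
    set ρ' : Fin n → Fin n := fun α => ⟨(ρ α).toNat, hlt α⟩ with hρ'
    have hinj' : Injective ρ' := by
      intro α β h
      apply hinj
      have := congrArg Fin.val h
      simp only [hρ'] at this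
      have := h0 α; have := h0 β; omega
    intro c hc0 hc1
    obtain ⟨α, hα⟩ := Finite.injective_iff_surjective.mp hinj' ⟨c.toNat, by omega⟩
    have := congrArg Fin.val hα
    simp only [hρ'] at this
    exact ⟨α, by have := h0 α; omega⟩
  have key_ind : ∀ d : ℕ, ∀ α β, ρ α - ρ β = d + 1 → key β < key α := by
    intro d
    induction d with
    | zero => intro α β h; exact hstep α β (by omega)
    | succ k ih =>
        intro α β h
        obtain ⟨γ, hγ⟩ := hsurj (ρ β + 1) (by have := h0 β; omega)
          (by have := h1 α; omega)
        exact lt_trans (hstep γ β hγ) (ih α γ (by omega))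
  intro α β h
  exact key_ind (ρ α - ρ β - 1).toNat α β (by omega)

/-- uniqueness of the rank function. -/
lemma rank_eq (key ρ : Fin n → ℤ) (hkey : Injective key) (hinj : Injective ρ)
    (h0 : ∀ α, 0 ≤ ρ α) (h1 : ∀ α, ρ α < n)
    (hmono : ∀ α β, key β < key α → ρ β < ρ α) :
    ρ = Rk key := by
  have hle : ∀ α, Rk key α ≤ ρ α := by
    intro α
    have himg : Finset.image ρ (univ.filter fun β => key β < key α)
        ⊆ Finset.Ico (0 : ℤ) (ρ α) := by
      intro x hx
      simp only [Finset.mem_image, mem_filter, mem_univ, true_and] at hx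
      obtain ⟨β, hβ, rfl⟩ := hx
      simp only [Finset.mem_Ico]
      exact ⟨h0 β, hmono α β hβ⟩
    have hcard := Finset.card_le_card himg
    rw [Finset.card_image_of_injective _ hinj, Int.card_Ico] at hcard
    rw [Rk]
    have := h0 α
    omega
  have hsum : ∑ α, ρ α = ∑ α, Rk key α := by
    rw [sum_inj_range ρ hinj h0 h1,
      sum_inj_range (Rk key) (Rk_inj key hkey) (Rk_nonneg key) (Rk_lt_n key)]
  have hz0 : ∑ α, (ρ α - Rk key α) = 0 := by
    rw [Finset.sum_sub_distrib, hsum]; ring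
  have hz := (Finset.sum_eq_zero_iff_of_nonneg (fun α _ => by
    have := hle α; omega : ∀ α ∈ univ, 0 ≤ ρ α - Rk key α)).mp hz0
  funext α
  have := hz α (mem_univ α)
  omega

/-! ### window decomposition -/

def alphaOf (n : ℕ) (hn : 0 < n) (x : ℤ) : Fin n :=
  ⟨((x - 1) % n).toNat, by
    have h1 : 0 ≤ (x-1) % n := Int.emod_nonneg _ (by exact_mod_cast hn.ne')
    have h2 : (x-1) % n < n := Int.emod_lt_of_pos _ (by exact_mod_cast hn)
    omega⟩

def tOf (n : ℕ) (x : ℤ) : ℤ := (x - 1) / n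

lemma alphaOf_tOf (hn : 0 < n) (x : ℤ) :
    x = ((alphaOf n hn x : ℤ) + 1) + n * tOf n x := by
  have h1 : 0 ≤ (x-1) % n := Int.emod_nonneg _ (by exact_mod_cast hn.ne')
  have := Int.mul_ediv_add_emod (x-1) n
  simp only [alphaOf, tOf]
  omega

lemma alphaOf_spec (hn : 0 < n) (α : Fin n) (t : ℤ) :
    alphaOf n hn ((α : ℤ) + 1 + n * t) = α ∧ tOf n ((α : ℤ) + 1 + n * t) = t := by
  have hα0 : (0:ℤ) ≤ α := Int.natCast_nonneg _
  have hαn : (α : ℤ) < n := by exact_mod_cast α.isLt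
  have he : ((α : ℤ) + 1 + n * t - 1) = (α : ℤ) + n * t := by ring
  constructor
  · apply Fin.ext
    simp only [alphaOf, he]
    rw [Int.add_mul_emod_self_left, Int.emod_eq_of_lt hα0 hαn]
    omega
  · simp only [tOf, he]
    rw [Int.add_mul_ediv_left _ _ (by exact_mod_cast hn.ne' : (n:ℤ) ≠ 0),
      Int.ediv_eq_zero_of_lt hα0 hαn]
    ring

lemma sum_window (hn : 0 < n) (F : ℤ → ℤ) :
    ∑ i ∈ Icc (1:ℤ) (n:ℤ), F i = ∑ α : Fin n, F ((α:ℤ)+1) := by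
  apply Finset.sum_nbij' (i := fun x => alphaOf n hn x) (j := fun α : Fin n => (α:ℤ)+1)
  · intro a _; exact mem_univ _
  · intro α _
    simp only [Finset.mem_Icc]
    have hα0 : (0:ℤ) ≤ α := Int.natCast_nonneg _
    have hαn : (α : ℤ) < n := by exact_mod_cast α.isLt
    omega
  · intro x hx
    simp only [Finset.mem_Icc] at hx
    have h := alphaOf_tOf hn x
    have ht : tOf n x = 0 := by
      simp only [tOf]
      apply Int.ediv_eq_zero_of_lt <;> omega
    rw [ht] at h
    omega
  · intro α _
    have := (alphaOf_spec hn α 0).1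
    simpa using this
  · intro x hx
    simp only [Finset.mem_Icc] at hx
    have h := alphaOf_tOf hn x
    have ht : tOf n x = 0 := by
      simp only [tOf]
      apply Int.ediv_eq_zero_of_lt <;> omega
    rw [ht] at h
    have : ((alphaOf n hn x : ℤ) + 1) = x := by omega
    rw [this]

/-- the inverse of an affine permutation is an affine permutation. -/
lemma affine_symm (hn : 0 < n) {ω : ℤ ≃ ℤ} (h : IsAffinePerm n ω) :
    IsAffinePerm n ω.symm := by
  obtain ⟨hper, hsum⟩ := h
  constructor
  · intro x
    have := per_symm hper x 1
    rwa [one_mul] at this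
  · rw [sum_window hn]
    rw [sum_window hn] at hsum
    set σ := ω.symm with hσ
    set βm : Fin n → Fin n := fun α => alphaOf n hn (σ ((α:ℤ)+1)) with hβm
    set cm : Fin n → ℤ := fun α => tOf n (σ ((α:ℤ)+1)) with hcm
    have hdec : ∀ α : Fin n, σ ((α:ℤ)+1) = ((βm α : ℤ) + 1) + n * cm α := fun α =>
      alphaOf_tOf hn _
    have hkey : ∀ α : Fin n, ω (((βm α : ℤ)) + 1) = ((α:ℤ)+1) - n * cm α := by
      intro α
      have h1 : ((βm α : ℤ) + 1) = σ ((α:ℤ)+1) + (-(cm α)) * n := by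
        rw [hdec α]; ring
      rw [h1, per_mul hper, hσ, Equiv.apply_symm_apply]
      ring
    have hβinj : Injective βm := by
      have hL : LeftInverse (fun γ : Fin n => alphaOf n hn (ω ((γ:ℤ)+1))) βm := by
        intro α
        show alphaOf n hn (ω ((βm α : ℤ)+1)) = α
        rw [hkey α]
        have : ((α:ℤ)+1) - n * cm α = (α:ℤ) + 1 + n * (-(cm α)) := by ring
        rw [this]
        exact (alphaOf_spec hn α (-(cm α))).1
      exact hL.injective
    have hβbij : Bijective βm := Finite.injective_iff_bijective.mp hβinj
    have e1 : ∑ α : Fin n, σ ((α:ℤ)+1)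
        = (∑ α : Fin n, ((βm α : ℤ)+1)) + n * ∑ α : Fin n, cm α := by
      rw [Finset.mul_sum, ← Finset.sum_add_distrib]
      exact Finset.sum_congr rfl (fun α _ => hdec α)
    have e2 : ∑ α : Fin n, ((βm α : ℤ)+1) = ∑ α : Fin n, ((α:ℤ)+1) :=
      Fintype.sum_bijective βm hβbij _ _ (fun α => rfl)
    have e3 : ∑ α : Fin n, ω (((βm α : ℤ))+1) = ∑ α : Fin n, ω ((α:ℤ)+1) :=
      Fintype.sum_bijective βm hβbij _ _ (fun α => rfl)
    have e4 : ∑ α : Fin n, ω (((βm α : ℤ))+1)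
        = (∑ α : Fin n, ((α:ℤ)+1)) - n * ∑ α : Fin n, cm α := by
      rw [Finset.mul_sum, ← Finset.sum_sub_distrib]
      exact Finset.sum_congr rfl (fun α _ => by rw [hkey α])
    have hI : 2 * ∑ α : Fin n, ((α:ℤ)+1) = n * (n+1) := by
      rw [← sum_window hn (fun i => i)]
      exact window_sum
    have hC : (n:ℤ) * ∑ α, cm α = 0 := by
      rw [e3] at e4
      omega
    rw [e1, e2, hC]
    omega

/-! ### the Anderson map -/

def vOf (n : ℕ) (σ : ℤ ≃ ℤ) (α : Fin n) : ℤ := σ ((α : ℤ) + 1)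

noncomputable def MminF (n : ℕ) (σ : ℤ ≃ ℤ) : ℤ :=
  if h : 0 < n then
    Finset.univ.inf' (by rwa [Finset.univ_nonempty_iff, ← Fin.pos_iff_nonempty]) (vOf n σ)
  else 0

noncomputable def gOf (m n : ℕ) (σ : ℤ ≃ ℤ) (α : Fin n) : ℤ :=
  kOf m n (vOf n σ α - MminF n σ)

noncomputable def rhoOf (m n : ℕ) (σ : ℤ ≃ ℤ) (α : Fin n) : ℤ :=
  rOf m n (vOf n σ α - MminF n σ)

noncomputable def keyOf (m n : ℕ) (σ : ℤ ≃ ℤ) (α : Fin n) : ℤ :=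
  gOf m n σ α * n + (α : ℤ)

noncomputable def AF (m n : ℕ) (σ : ℤ ≃ ℤ) (α : Fin n) : ℕ := (gOf m n σ α).toNat

section Forward

lemma MminF_le (hn : 0 < n) (σ : ℤ ≃ ℤ) (α : Fin n) : MminF n σ ≤ vOf n σ α := by
  rw [MminF, dif_pos hn]
  exact Finset.inf'_le _ (Finset.mem_univ α)

lemma MminF_mem (hn : 0 < n) (σ : ℤ ≃ ℤ) : ∃ α : Fin n, vOf n σ α = MminF n σ := by
  rw [MminF, dif_pos hn]
  obtain ⟨α, _, hα⟩ := Finset.exists_mem_eq_inf' (s := (Finset.univ : Finset (Fin n)))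
    (by rwa [Finset.univ_nonempty_iff, ← Fin.pos_iff_nonempty]) (vOf n σ)
  exact ⟨α, hα.symm⟩

lemma Mpos (hn : 0 < n) (σ : ℤ ≃ ℤ) : 0 < σ.symm (MminF n σ) := by
  obtain ⟨α, hα⟩ := MminF_mem hn σ
  rw [← hα, vOf, Equiv.symm_apply_apply]
  have : (0:ℤ) ≤ α := Int.natCast_nonneg _
  omega

lemma Mmin_le (hn : 0 < n) (σ : ℤ ≃ ℤ) (hper : ∀ x : ℤ, σ (x + n) = σ x + n) (i : ℤ) (hi : 0 < σ.symm i) :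
    MminF n σ ≤ i := by
  set y := σ.symm i with hy
  have hiy : i = σ y := (Equiv.apply_symm_apply σ i).symm
  have ht : 0 ≤ tOf n y := Int.ediv_nonneg (by omega) (by exact_mod_cast hn.le)
  have hdec := alphaOf_tOf hn y
  set β := alphaOf n hn y with hβ
  have h1 : σ y = vOf n σ β + tOf n y * n := by
    have h2 : y = ((β:ℤ)+1) + tOf n y * n := by linarith [hdec]
    conv_lhs => rw [h2]
    rw [per_mul hper]
    rfl
  have h3 := MminF_le hn σ β
  have h4 : 0 ≤ tOf n y * n := mul_nonneg ht (by exact_mod_cast hn.le)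
  omega

lemma fdecomp (σ : ℤ ≃ ℤ) (hcop : Nat.Coprime m n) (α : Fin n) :
    vOf n σ α - MminF n σ = rhoOf m n σ α * m - gOf m n σ α * n :=
  rOf_kOf_spec hcop _

lemma rho_nonneg (hn : 0 < n) (σ : ℤ ≃ ℤ) (α : Fin n) : 0 ≤ rhoOf m n σ α := rOf_nonneg hn _

lemma rho_lt (hn : 0 < n) (σ : ℤ ≃ ℤ) (α : Fin n) : rhoOf m n σ α < n := rOf_lt hn _

lemma key_inj_f (hn : 0 < n) (σ : ℤ ≃ ℤ) : Injective (keyOf m n σ) := by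
  intro α β h
  simp only [keyOf] at h
  have hα0 : (0:ℤ) ≤ α := Int.natCast_nonneg _
  have hαn : (α : ℤ) < n := by exact_mod_cast α.isLt
  have hβ0 : (0:ℤ) ≤ β := Int.natCast_nonneg _
  have hβn : (β : ℤ) < n := by exact_mod_cast β.isLt
  have hdvd : (n:ℤ) ∣ (β:ℤ) - α := ⟨gOf m n σ α - gOf m n σ β, by linarith⟩
  have := small_mul_zero hn hdvd (by omega) (by omega)
  have : (α : ℤ) = β := by omega
  exact Fin.ext (by exact_mod_cast this)

lemma rho_inj (hn : 0 < n) (hcop : Nat.Coprime m n) (σ : ℤ ≃ ℤ) (hper : ∀ x : ℤ, σ (x + n) = σ x + n) : Injective (rhoOf m n σ) := by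
  intro α β h
  have e1 := fdecomp (m := m) σ hcop α
  have e2 := fdecomp (m := m) σ hcop β
  rw [h] at e1
  have e3 : vOf n σ α = σ (((β:ℤ)+1) + (gOf m n σ β - gOf m n σ α) * n) := by
    rw [per_mul hper]
    have hv : σ ((β:ℤ)+1) = vOf n σ β := rfl
    have hsplit : (gOf m n σ β - gOf m n σ α) * (n:ℤ)
        = gOf m n σ β * n - gOf m n σ α * n := by ring
    rw [hv, hsplit]
    linarith
  have e4 : ((α:ℤ)+1) = ((β:ℤ)+1) + (gOf m n σ β - gOf m n σ α) * n :=
    σ.injective e3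
  have hα0 : (0:ℤ) ≤ α := Int.natCast_nonneg _
  have hαn : (α : ℤ) < n := by exact_mod_cast α.isLt
  have hβ0 : (0:ℤ) ≤ β := Int.natCast_nonneg _
  have hβn : (β : ℤ) < n := by exact_mod_cast β.isLt
  have hdvd : (n:ℤ) ∣ (α:ℤ) - β := ⟨gOf m n σ β - gOf m n σ α, by linarith⟩
  have := small_mul_zero hn hdvd (by omega) (by omega)
  have : (α : ℤ) = β := by omega
  exact Fin.ext (by exact_mod_cast this)

lemma step_key (hn : 0 < n) (hcop : Nat.Coprime m n) (σ : ℤ ≃ ℤ) (hper : ∀ x : ℤ, σ (x + n) = σ x + n)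
    (hstab : ∀ a b : ℤ, σ a = σ b + m → b < a) {α β : Fin n}
    (h : rhoOf m n σ α = rhoOf m n σ β + 1) :
    keyOf m n σ β < keyOf m n σ α := by
  have e1 := fdecomp (m := m) σ hcop α
  have e2 := fdecomp (m := m) σ hcop β
  have e3 : σ (((α:ℤ)+1) + (gOf m n σ α - gOf m n σ β) * n) = σ ((β:ℤ)+1) + m := by
    rw [per_mul hper]
    have h1 : σ ((α:ℤ)+1) = vOf n σ α := rfl
    have h2 : σ ((β:ℤ)+1) = vOf n σ β := rfl
    rw [h1, h2]
    have : vOf n σ α - vOf n σ β = m - (gOf m n σ α - gOf m n σ β) * n := by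
      rw [h] at e1; linarith [e1, e2]
    linarith
  have hba := hstab _ _ e3
  have hsplit : (gOf m n σ α - gOf m n σ β) * (n:ℤ)
      = gOf m n σ α * n - gOf m n σ β * n := by ring
  simp only [keyOf]
  linarith

lemma alpha_zero (hn : 0 < n) (σ : ℤ ≃ ℤ) (hcop : Nat.Coprime m n) :
    ∃ α : Fin n, rhoOf m n σ α = 0 ∧ gOf m n σ α = 0 := by
  obtain ⟨α, hα⟩ := MminF_mem hn σ
  have e := fdecomp (m := m) σ hcop α
  rw [hα, sub_self] at e
  have h0 : (0:ℤ) = (0:ℤ) * m - (0:ℤ) * n := by ring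
  have := decomp_unique hn hcop (by linarith [e] : rhoOf m n σ α * m - gOf m n σ α * n = (0:ℤ) * m - (0:ℤ) * n)
    (rho_nonneg hn σ α) (rho_lt hn σ α) le_rfl (by exact_mod_cast hn)
  exact ⟨α, this.1, this.2⟩

lemma g_nonneg (hn : 0 < n) (hcop : Nat.Coprime m n) (σ : ℤ ≃ ℤ) (hper : ∀ x : ℤ, σ (x + n) = σ x + n)
    (hstab : ∀ a b : ℤ, σ a = σ b + m → b < a) (α : Fin n) :
    0 ≤ gOf m n σ α := by
  obtain ⟨α₀, hρ0, hg0⟩ := alpha_zero hn σ hcop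
  by_cases haa : α = α₀
  · rw [haa, hg0]
  · have hne : rhoOf m n σ α ≠ 0 := by
      intro h
      exact haa (rho_inj hn hcop σ hper (h.trans hρ0.symm))
    have hpos : rhoOf m n σ α₀ < rhoOf m n σ α := by
      have := rho_nonneg (m := m) hn σ α
      omega
    have hkey := chain_mono (keyOf m n σ) (rhoOf m n σ) (rho_inj hn hcop σ hper)
      (rho_nonneg hn σ) (rho_lt hn σ)
      (fun a b hab => step_key hn hcop σ hper hstab hab) α α₀ hpos
    simp only [keyOf, hg0, zero_mul, zero_add] at hkey
    by_contra hneg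
    push_neg at hneg
    have h1 : gOf m n σ α ≤ -1 := by omega
    have h2 : gOf m n σ α * n ≤ (-1 : ℤ) * n :=
      mul_le_mul_of_nonneg_right h1 (by exact_mod_cast hn.le)
    have hα0 : (0:ℤ) ≤ α₀ := Int.natCast_nonneg _
    have hαn : (α : ℤ) < n := by exact_mod_cast α.isLt
    linarith

lemma rho_eq_rank (hn : 0 < n) (hcop : Nat.Coprime m n) (σ : ℤ ≃ ℤ) (hper : ∀ x : ℤ, σ (x + n) = σ x + n)
    (hstab : ∀ a b : ℤ, σ a = σ b + m → b < a) :
    rhoOf m n σ = Rk (keyOf m n σ) := by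
  apply rank_eq (keyOf m n σ) (rhoOf m n σ) (key_inj_f hn σ) (rho_inj hn hcop σ hper)
    (rho_nonneg hn σ) (rho_lt hn σ)
  intro α β h
  rcases lt_trichotomy (rhoOf m n σ β) (rhoOf m n σ α) with h' | h' | h'
  · exact h'
  · exact absurd (rho_inj hn hcop σ hper h') (by rintro rfl; exact lt_irrefl _ h)
  · have := chain_mono (keyOf m n σ) (rhoOf m n σ) (rho_inj hn hcop σ hper)
      (rho_nonneg hn σ) (rho_lt hn σ)
      (fun a b hab => step_key hn hcop σ hper hstab hab) β α h'
    omega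

lemma g_n_le (hn : 0 < n) (σ : ℤ ≃ ℤ) (hcop : Nat.Coprime m n) (α : Fin n) :
    gOf m n σ α * n ≤ rhoOf m n σ α * m := by
  have := fdecomp (m := m) σ hcop α
  have := MminF_le hn σ α
  omega

lemma parking_forward (hm : 0 < m) (hn : 0 < n) (hcop : Nat.Coprime m n) (σ : ℤ ≃ ℤ) (hper : ∀ x : ℤ, σ (x + n) = σ x + n)
    (hstab : ∀ a b : ℤ, σ a = σ b + m → b < a) :
    IsParkingFn m n (AF m n σ) := by
  intro ℓ hl0 hlm
  rw [ncard_eq]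
  set S := univ.filter (fun α => AF m n σ α < ℓ) with hS
  by_cases hSu : S = univ
  · have hcard : S.card = n := by rw [hSu, card_univ, Fintype.card_fin]
    rw [hcard]
    exact Nat.mul_le_mul_right n hlm
  · have hex : ∃ α, α ∈ univ.filter (fun α => ¬ AF m n σ α < ℓ) := by
      by_contra hcon
      push_neg at hcon
      apply hSu
      apply Finset.eq_univ_of_forall
      intro α
      have h' := hcon α
      simp only [mem_filter, mem_univ, true_and, not_not] at h'
      simp only [hS, mem_filter, mem_univ, true_and]
      omega
    obtain ⟨a₀, ha₀⟩ := hex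
    obtain ⟨α₁, hα₁T, hmin⟩ := Finset.exists_min_image _ (keyOf m n σ) ⟨a₀, ha₀⟩
    have hsubset : univ.filter (fun β => keyOf m n σ β < keyOf m n σ α₁) ⊆ S := by
      intro β hβ
      simp only [mem_filter, mem_univ, true_and] at hβ
      by_contra hβS
      have hβT : β ∈ univ.filter (fun α => ¬ AF m n σ α < ℓ) := by
        simp only [hS, mem_filter, mem_univ, true_and] at hβS ⊢
        exact hβS
      have := hmin β hβT
      omega
    have h1 : Rk (keyOf m n σ) α₁ ≤ (S.card : ℤ) := by
      simp only [Rk]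
      exact_mod_cast Finset.card_le_card hsubset
    have hgnn := g_nonneg hn hcop σ hper hstab α₁
    have hAg : ((AF m n σ α₁ : ℕ) : ℤ) = gOf m n σ α₁ := Int.toNat_of_nonneg hgnn
    have h2 : (ℓ:ℤ) ≤ gOf m n σ α₁ := by
      simp only [mem_filter, mem_univ, true_and, not_lt] at hα₁T
      omega
    have h3 := g_n_le hn σ hcop α₁
    have h4 : rhoOf m n σ α₁ ≤ (S.card : ℤ) := by
      rw [rho_eq_rank hn hcop σ hper hstab]
      exact h1
    have h5 : (ℓ:ℤ) * n ≤ gOf m n σ α₁ * n :=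
      mul_le_mul_of_nonneg_right h2 (by exact_mod_cast hn.le)
    have h6 : rhoOf m n σ α₁ * m ≤ (S.card : ℤ) * m :=
      mul_le_mul_of_nonneg_right h4 (by exact_mod_cast hm.le)
    have : (ℓ:ℤ) * n ≤ (m:ℤ) * S.card := by
      rw [mul_comm (m:ℤ)]
      linarith
    exact_mod_cast this

end Forward

lemma stab_symm {ω : ℤ ≃ ℤ} (h : IsMStable m ω) :
    ∀ a b : ℤ, ω.symm a = ω.symm b + m → b < a := by
  intro a b hab
  have h1 := h (ω.symm b)
  rw [← hab] at h1
  simpa using h1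

lemma construct (hm : 0 < m) (hn : 0 < n) (hcop : Nat.Coprime m n)
    (f : Fin n → ℕ) (hf : IsParkingFn m n f) :
    ∃ ω : ℤ ≃ ℤ, (IsAffinePerm n ω ∧ IsMStable m ω) ∧ AF m n ω.symm = f := by
  classical
  have hnZ : (0:ℤ) < n := by exact_mod_cast hn
  have hmZ : (0:ℤ) < m := by exact_mod_cast hm
  set key : Fin n → ℤ := fun α => (f α : ℤ) * n + (α : ℤ) with hkeydef
  have hkeyinj : Injective key := by
    intro α β h
    have h1 : (0:ℤ) ≤ (α:ℤ) := Int.natCast_nonneg _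
    have h2 : ((α:ℤ) : ℤ) < n := by exact_mod_cast α.isLt
    have h3 : (0:ℤ) ≤ (β:ℤ) := Int.natCast_nonneg _
    have h4 : ((β:ℤ) : ℤ) < n := by exact_mod_cast β.isLt
    simp only [hkeydef] at h
    have hdvd : (n:ℤ) ∣ (β:ℤ) - (α:ℤ) := ⟨(f α : ℤ) - f β, by linarith⟩
    have h5 := small_mul_zero hn hdvd (by omega) (by omega)
    have h6 : (α:ℤ) = (β:ℤ) := by omega
    exact Fin.ext (by exact_mod_cast h6)
  have hRkinj := Rk_inj key hkeyinj
  -- all values of f are < m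
  have hflt : ∀ α, f α < m := by
    intro α
    by_contra hge
    push_neg at hge
    have hp := hf m hm le_rfl
    rw [ncard_eq] at hp
    have hsub : univ.filter (fun β => f β < m) ⊆ univ.erase α := by
      intro β hβ
      simp only [mem_filter, mem_univ, true_and] at hβ
      apply Finset.mem_erase.mpr
      refine ⟨?_, mem_univ β⟩
      rintro rfl; omega
    have hcard := Finset.card_le_card hsub
    rw [Finset.card_erase_of_mem (mem_univ α), card_univ, Fintype.card_fin] at hcard
    have h7 := Nat.mul_le_mul_left m hcard
    have h8 : m * n ≤ m * (n - 1) := le_trans hp h7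
    have h9 := Nat.le_of_mul_le_mul_left h8 hm
    omega
  -- pointwise parking inequality
  have hp1 : ∀ α, (f α : ℤ) * n ≤ Rk key α * m := by
    intro α
    by_cases h0 : f α = 0
    · rw [h0]
      simp only [Nat.cast_zero, zero_mul]
      exact mul_nonneg (Rk_nonneg key α) hmZ.le
    · have h1 : 0 < f α := Nat.pos_of_ne_zero h0
      have hp := hf (f α) h1 (le_of_lt (hflt α))
      rw [ncard_eq] at hp
      have hsub : univ.filter (fun β => f β < f α)
          ⊆ univ.filter (fun β => key β < key α) := by
        intro β hβ
        simp only [mem_filter, mem_univ, true_and] at hβ ⊢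
        simp only [hkeydef]
        refine (key_ineq hn (Int.natCast_nonneg _) (by exact_mod_cast β.isLt)
          (Int.natCast_nonneg _) (by exact_mod_cast α.isLt)).mpr ?_
        exact Or.inl (by exact_mod_cast hβ)
      have hcard := Finset.card_le_card hsub
      have h2 : ((f α * n : ℕ) : ℤ)
          ≤ ((m * (univ.filter (fun β => key β < key α)).card : ℕ) : ℤ) := by
        exact_mod_cast le_trans hp (Nat.mul_le_mul_left m hcard)
      push_cast at h2
      rw [Rk]
      linarith
  -- the minimal element
  have hp2 : ∃ α₀, Rk key α₀ = 0 ∧ f α₀ = 0 := by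
    have hex0 : ∃ β, f β = 0 := by
      have hp := hf 1 one_pos hm
      rw [ncard_eq] at hp
      have hpos : 0 < (univ.filter (fun β => f β < 1)).card := by
        by_contra hcon
        push_neg at hcon
        have hc0 : (univ.filter (fun β => f β < 1)).card = 0 := by omega
        rw [hc0] at hp
        omega
      obtain ⟨β, hβ⟩ := Finset.card_pos.mp hpos
      simp only [mem_filter] at hβ
      exact ⟨β, by omega⟩
    obtain ⟨β, hβ0⟩ := hex0
    obtain ⟨α₀, _, hmin⟩ := Finset.exists_min_image univ key ⟨β, mem_univ β⟩
    refine ⟨α₀, ?_, ?_⟩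
    · rw [Rk]
      have hfe : univ.filter (fun γ => key γ < key α₀) = ∅ := by
        apply Finset.filter_eq_empty_iff.mpr
        intro γ _
        exact not_lt.mpr (hmin γ (mem_univ γ))
      rw [hfe]
      simp
    · by_contra h0
      have hk : key β < key α₀ := by
        simp only [hkeydef]
        refine (key_ineq hn (Int.natCast_nonneg _) (by exact_mod_cast β.isLt)
          (Int.natCast_nonneg _) (by exact_mod_cast α₀.isLt)).mpr ?_
        exact Or.inl (by exact_mod_cast (by omega : f β < f α₀))
      exact absurd (hmin β (mem_univ β)) (by omega)
  obtain ⟨α₀, hRk0, hf0⟩ := hp2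
  -- the normalizing constant
  obtain ⟨c, hc⟩ : ∃ c : ℤ, (n:ℤ) + 1 + m - m * n = 2 * c := by
    rcases Nat.even_or_odd m with hme | hmo
    · have hno : Odd n := by
        rcases Nat.even_or_odd n with hne | hno
        · exfalso
          obtain ⟨a, ha⟩ := hme
          obtain ⟨b, hb⟩ := hne
          have h2 : 2 ∣ Nat.gcd m n := Nat.dvd_gcd ⟨a, by omega⟩ ⟨b, by omega⟩
          rw [hcop] at h2
          omega
        · exact hno
      obtain ⟨j, hj⟩ := hno
      refine ⟨(j:ℤ) + 1 - m * j, ?_⟩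
      have hnj : (n:ℤ) = 2*j+1 := by exact_mod_cast hj
      rw [hnj]; ring
    · obtain ⟨j, hj⟩ := hmo
      refine ⟨1 + j - j * n, ?_⟩
      have hmj : (m:ℤ) = 2*j+1 := by exact_mod_cast hj
      rw [hmj]; ring
  set M : ℤ := c + ∑ α : Fin n, (f α : ℤ) with hMdef
  set vc : Fin n → ℤ := fun α => M + Rk key α * m - (f α : ℤ) * n with hvc
  set σfun : ℤ → ℤ := fun x => vc (alphaOf n hn x) + n * tOf n x with hσf
  have hσat : ∀ (α : Fin n) (t : ℤ), σfun ((α:ℤ) + 1 + n * t) = vc α + n * t := by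
    intro α t
    simp only [hσf]
    rw [(alphaOf_spec hn α t).1, (alphaOf_spec hn α t).2]
  -- injectivity of σfun
  have hinj : Injective σfun := by
    intro x y hxy
    have hx := alphaOf_tOf hn x
    have hy := alphaOf_tOf hn y
    set a := alphaOf n hn x
    set b := alphaOf n hn y
    set s := tOf n x
    set t := tOf n y
    simp only [hσf, hvc] at hxy
    have hdvd : (n:ℤ) ∣ (Rk key a - Rk key b) * m :=
      ⟨(f a:ℤ) - f b + t - s, by linarith⟩
    have hd := (int_cop hcop).dvd_of_dvd_mul_right hdvd
    have h0 := small_mul_zero hn hd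
      (by have := Rk_nonneg key a; have := Rk_lt_n key b; omega)
      (by have := Rk_lt_n key a; have := Rk_nonneg key b; omega)
    have hab : a = b := hRkinj (by omega)
    have habz : ((a : ℤ)) = ((b : ℤ)) := by rw [hab]
    have hfab : ((f a : ℤ)) = ((f b : ℤ)) := by rw [hab]
    have hRab : Rk key a = Rk key b := by rw [hab]
    have hst : (n:ℤ) * s = n * t := by
      have hxy' : M + Rk key a * (m:ℤ) - (f a:ℤ) * n + n * s
          = M + Rk key b * m - (f b:ℤ) * n + n * t := hxy
      rw [hRab, hfab] at hxy'
      linarith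
    linarith [hx, hy]
  -- surjectivity of σfun
  have hsurj : Surjective σfun := by
    intro y
    have hb := bezout hcop
    set q := ((y - M) * Nat.gcdA m n) / n with hq
    set j := ((y - M) * Nat.gcdA m n) % n with hj
    have hj0 : 0 ≤ j := Int.emod_nonneg _ (by exact_mod_cast hn.ne')
    have hjn : j < n := Int.emod_lt_of_pos _ (by exact_mod_cast hn)
    obtain ⟨α, hα⟩ := rank_surj key hkeyinj hj0 hjn
    have hjq : j = (y - M) * Nat.gcdA m n - n * q := by rw [hj, hq, Int.emod_def]
    have hdvd : (n:ℤ) ∣ y - vc α := by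
      refine ⟨(y - M) * Nat.gcdB m n + q * m + f α, ?_⟩
      simp only [hvc]
      rw [hα, hjq]
      linear_combination (-(y - M)) * hb
    obtain ⟨t, ht⟩ := hdvd
    refine ⟨(α:ℤ) + 1 + n * t, ?_⟩
    rw [hσat α t]
    linarith
  set σE := Equiv.ofBijective σfun ⟨hinj, hsurj⟩ with hσE
  have hσEapp : ∀ x, σE x = σfun x := fun x => rfl
  -- periodicity
  have hperσ : ∀ x : ℤ, σE (x + n) = σE x + n := by
    intro x
    rw [hσEapp, hσEapp]
    have hx := alphaOf_tOf hn x
    have h2 := hσat (alphaOf n hn x) (tOf n x)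
    rw [← hx] at h2
    have h1 : x + n = ((alphaOf n hn x : ℤ) + 1) + n * (tOf n x + 1) := by linarith
    rw [h1, hσat]
    linarith
  -- stability
  have hstabσ : ∀ a b : ℤ, σfun a = σfun b + m → b < a := by
    intro a b hab
    have hxa := alphaOf_tOf hn a
    have hxb := alphaOf_tOf hn b
    set α := alphaOf n hn a
    set β := alphaOf n hn b
    set s := tOf n a
    set t := tOf n b
    have h2a := hσat α s
    rw [← hxa] at h2a
    have h2b := hσat β t
    rw [← hxb] at h2b
    rw [h2a, h2b] at hab
    simp only [hvc] at hab
    have hdvd : (n:ℤ) ∣ (Rk key α - Rk key β - 1) * m :=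
      ⟨(f α:ℤ) - f β + t - s, by linarith⟩
    have hd := (int_cop hcop).dvd_of_dvd_mul_right hdvd
    have hb1 : -(n:ℤ) ≤ Rk key α - Rk key β - 1 := by
      have := Rk_nonneg key α; have := Rk_lt_n key β; omega
    have hb2 : Rk key α - Rk key β - 1 ≤ (n:ℤ) - 2 := by
      have := Rk_lt_n key α; have := Rk_nonneg key β; omega
    have hcase := dvd_range_cases hn hd hb1 hb2
    have hα0 : (0:ℤ) ≤ (α:ℤ) := Int.natCast_nonneg _
    have hαn : ((α:ℤ) : ℤ) < n := by exact_mod_cast α.isLt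
    have hβ0 : (0:ℤ) ≤ (β:ℤ) := Int.natCast_nonneg _
    have hβn : ((β:ℤ) : ℤ) < n := by exact_mod_cast β.isLt
    rcases hcase with h0 | h0
    · have hk : key β < key α := (Rk_lt_iff key hkeyinj).mp (by omega)
      have h1 : Rk key α = Rk key β + 1 := by omega
      rw [h1] at hab
      simp only [hkeydef] at hk
      rw [hxa, hxb]
      linarith
    · have h1 : Rk key α = Rk key β + 1 - n := by omega
      rw [h1] at hab
      have hfb : (f β:ℤ) < m := by exact_mod_cast hflt β
      have h5 : (f β:ℤ) * n ≤ ((m:ℤ) - 1) * n :=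
        mul_le_mul_of_nonneg_right (by omega) hnZ.le
      have h6 : (0:ℤ) ≤ (f α:ℤ) * n := mul_nonneg (Int.natCast_nonneg _) hnZ.le
      rw [hxa, hxb]
      linarith
  -- sum condition
  have hsumσ : 2 * ∑ i ∈ Icc (1:ℤ) (n:ℤ), σE i = n * (n+1) := by
    rw [sum_window hn]
    have h1 : ∀ α : Fin n, σE ((α:ℤ)+1) = vc α := by
      intro α
      rw [hσEapp]
      have := hσat α 0
      simpa using this
    rw [Finset.sum_congr rfl (fun α _ => h1 α)]
    simp only [hvc]
    rw [Finset.sum_sub_distrib, Finset.sum_add_distrib, Finset.sum_const, card_univ,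
      Fintype.card_fin, ← Finset.sum_mul, ← Finset.sum_mul,
      sum_inj_range (Rk key) hRkinj (Rk_nonneg key) (Rk_lt_n key), nsmul_eq_mul]
    have h2 := fin_sum2 hn
    simp only [hMdef]
    linear_combination (-(n:ℤ)) * hc + (m:ℤ) * h2
  have haff : IsAffinePerm n σE := ⟨hperσ, hsumσ⟩
  refine ⟨σE.symm, ⟨affine_symm hn haff, ?_⟩, ?_⟩
  · -- stability
    intro x
    apply hstabσ
    have e1 : σfun (σE.symm (x + m)) = x + m := σE.apply_symm_apply (x + m)
    have e2 : σfun (σE.symm x) = x := σE.apply_symm_apply x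
    rw [e1, e2]
  · -- the Anderson map recovers f
    rw [Equiv.symm_symm]
    funext α
    have hvOf : vOf n σE = vc := by
      funext γ
      rw [vOf, hσEapp]
      have := hσat γ 0
      simpa using this
    have hM : MminF n σE = M := by
      rw [MminF, dif_pos hn]
      apply le_antisymm
      · have h1 : vOf n σE α₀ = M := by
          rw [hvOf]
          simp only [hvc]
          rw [hRk0, hf0]
          push_cast
          ring
        exact le_of_le_of_eq (Finset.inf'_le _ (Finset.mem_univ α₀)) h1
      · apply Finset.le_inf'
        intro β _
        rw [hvOf]
        simp only [hvc]
        have := hp1 β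
        linarith
    show (gOf m n σE α).toNat = f α
    rw [gOf, hvOf, hM]
    have hx : vc α - M = Rk key α * m - (f α:ℤ) * n := by simp only [hvc]; ring
    rw [hx]
    have hspec := rOf_kOf_spec (m := m) (n := n) hcop (Rk key α * m - (f α:ℤ) * n)
    have hun := decomp_unique hn hcop hspec.symm (rOf_nonneg hn _) (rOf_lt hn _)
      (Rk_nonneg key α) (Rk_lt_n key α)
    rw [hun.2]
    exact Int.toNat_natCast _

lemma inject (hm : 0 < m) (hn : 0 < n) (hcop : Nat.Coprime m n)
    {ω₁ ω₂ : ℤ ≃ ℤ} (h₁ : IsAffinePerm n ω₁ ∧ IsMStable m ω₁)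
    (h₂ : IsAffinePerm n ω₂ ∧ IsMStable m ω₂)
    (hA : AF m n ω₁.symm = AF m n ω₂.symm) : ω₁ = ω₂ := by
  have hper₁ : ∀ x : ℤ, ω₁.symm (x + n) = ω₁.symm x + n := fun x => by
    have := per_symm h₁.1.1 x 1; rwa [one_mul] at this
  have hper₂ : ∀ x : ℤ, ω₂.symm (x + n) = ω₂.symm x + n := fun x => by
    have := per_symm h₂.1.1 x 1; rwa [one_mul] at this
  have hst₁ := stab_symm h₁.2
  have hst₂ := stab_symm h₂.2
  have hg : gOf m n ω₁.symm = gOf m n ω₂.symm := by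
    funext α
    have e1 : gOf m n ω₁.symm α = ((AF m n ω₁.symm α : ℕ) : ℤ) :=
      (Int.toNat_of_nonneg (g_nonneg hn hcop _ hper₁ hst₁ α)).symm
    have e2 : gOf m n ω₂.symm α = ((AF m n ω₂.symm α : ℕ) : ℤ) :=
      (Int.toNat_of_nonneg (g_nonneg hn hcop _ hper₂ hst₂ α)).symm
    rw [e1, e2, hA]
  have hkey : keyOf m n ω₁.symm = keyOf m n ω₂.symm := by
    funext α
    simp only [keyOf, hg]
  have hρ : rhoOf m n ω₁.symm = rhoOf m n ω₂.symm := by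
    rw [rho_eq_rank hn hcop _ hper₁ hst₁, rho_eq_rank hn hcop _ hper₂ hst₂, hkey]
  have hs₁ := (affine_symm hn h₁.1).2
  have hs₂ := (affine_symm hn h₂.1).2
  rw [sum_window hn] at hs₁ hs₂
  have hv₁ : ∀ α : Fin n, vOf n ω₁.symm α
      = MminF n ω₁.symm + (rhoOf m n ω₁.symm α * m - gOf m n ω₁.symm α * n) := by
    intro α
    have := fdecomp (m := m) ω₁.symm hcop α
    linarith
  have hv₂ : ∀ α : Fin n, vOf n ω₂.symm α
      = MminF n ω₂.symm + (rhoOf m n ω₂.symm α * m - gOf m n ω₂.symm α * n) := by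
    intro α
    have := fdecomp (m := m) ω₂.symm hcop α
    linarith
  have hsum₁ : ∑ α : Fin n, vOf n ω₁.symm α = n * MminF n ω₁.symm
      + ∑ α : Fin n, (rhoOf m n ω₁.symm α * m - gOf m n ω₁.symm α * n) := by
    rw [Finset.sum_congr rfl (fun α _ => hv₁ α), Finset.sum_add_distrib,
      Finset.sum_const, card_univ, Fintype.card_fin, nsmul_eq_mul]
  have hsum₂ : ∑ α : Fin n, vOf n ω₂.symm α = n * MminF n ω₂.symm
      + ∑ α : Fin n, (rhoOf m n ω₂.symm α * m - gOf m n ω₂.symm α * n) := by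
    rw [Finset.sum_congr rfl (fun α _ => hv₂ α), Finset.sum_add_distrib,
      Finset.sum_const, card_univ, Fintype.card_fin, nsmul_eq_mul]
  have hX : ∑ α : Fin n, (rhoOf m n ω₁.symm α * m - gOf m n ω₁.symm α * n)
      = ∑ α : Fin n, (rhoOf m n ω₂.symm α * m - gOf m n ω₂.symm α * n) := by
    rw [hρ, hg]
  have hS₁ : ∑ α : Fin n, vOf n ω₁.symm α = ∑ α : Fin n, ω₁.symm ((α:ℤ)+1) := rfl
  have hS₂ : ∑ α : Fin n, vOf n ω₂.symm α = ∑ α : Fin n, ω₂.symm ((α:ℤ)+1) := rfl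
  have hMeq : MminF n ω₁.symm = MminF n ω₂.symm := by
    have hnn : (n:ℤ) * MminF n ω₁.symm = n * MminF n ω₂.symm := by
      rw [hS₁] at hsum₁
      rw [hS₂] at hsum₂
      linarith
    exact mul_left_cancel₀ (by exact_mod_cast hn.ne' : (n:ℤ) ≠ 0) hnn
  have hveq : ∀ α : Fin n, vOf n ω₁.symm α = vOf n ω₂.symm α := by
    intro α
    rw [hv₁ α, hv₂ α, hMeq, hρ, hg]
  have hfun : ∀ x : ℤ, ω₁.symm x = ω₂.symm x := by
    intro x
    have hx := alphaOf_tOf hn x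
    have hx' : x = ((alphaOf n hn x : ℤ) + 1) + tOf n x * n := by linarith
    have e1 : ω₁.symm x = vOf n ω₁.symm (alphaOf n hn x) + tOf n x * n := by
      conv_lhs => rw [hx']
      rw [per_mul hper₁]
      rfl
    have e2 : ω₂.symm x = vOf n ω₂.symm (alphaOf n hn x) + tOf n x * n := by
      conv_lhs => rw [hx']
      rw [per_mul hper₂]
      rfl
    rw [e1, e2, hveq]
  have hsymm : ω₁.symm = ω₂.symm := Equiv.ext hfun
  have := congrArg Equiv.symm hsymm
  simpa using this

end AndersonAux

/-- The Anderson map `A` is a bijection from `m`-stable affine permutations to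
`m/n`-parking functions: with `M_ω = min{i : ω(i) > 0}` and the unique
decomposition `ω⁻¹(α) - M_ω = r·m - k·n` with `0 ≤ r < n`, one has `k ≥ 0` and
`A_ω(α) = k`. -/
theorem stmt_7 (m n : ℕ) (hm : 0 < m) (hn : 0 < n) (hcop : Nat.Coprime m n) :
    ∃ A : {ω : ℤ ≃ ℤ // IsAffinePerm n ω ∧ IsMStable m ω} →
          {f : Fin n → ℕ // IsParkingFn m n f},
      Function.Bijective A ∧
      ∀ (ω : {ω : ℤ ≃ ℤ // IsAffinePerm n ω ∧ IsMStable m ω})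
        (α : Fin n) (M r k : ℤ),
        0 < ω.1 M → (∀ i : ℤ, 0 < ω.1 i → M ≤ i) →
        0 ≤ r → r < n →
        ω.1.symm ((α : ℤ) + 1) - M = r * m - k * n →
        0 ≤ k ∧ ((A ω).1 α : ℤ) = k := by
  classical
  have hstab' : ∀ ω : ℤ ≃ ℤ, (IsAffinePerm n ω ∧ IsMStable m ω) →
      ((∀ x : ℤ, ω.symm (x + n) = ω.symm x + n)
        ∧ (∀ a b : ℤ, ω.symm a = ω.symm b + m → b < a)) := by
    intro ω h
    refine ⟨fun x => ?_, AndersonAux.stab_symm h.2⟩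
    have := AndersonAux.per_symm h.1.1 x 1
    rwa [one_mul] at this
  refine ⟨fun ω => ⟨AndersonAux.AF m n ω.1.symm,
      AndersonAux.parking_forward hm hn hcop ω.1.symm (hstab' ω.1 ω.2).1 (hstab' ω.1 ω.2).2⟩,
    ⟨?_, ?_⟩, ?_⟩
  · intro ω₁ ω₂ h
    have hA : AndersonAux.AF m n ω₁.1.symm = AndersonAux.AF m n ω₂.1.symm := by
      have := congrArg Subtype.val h
      simpa using this
    exact Subtype.ext (AndersonAux.inject hm hn hcop ω₁.2 ω₂.2 hA)
  · intro f
    obtain ⟨ω, hω, hAf⟩ := AndersonAux.construct hm hn hcop f.1 f.2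
    exact ⟨⟨ω, hω⟩, Subtype.ext hAf⟩
  · intro ω α M r k hMpos hMmin hr0 hrn heq
    have hper := (hstab' ω.1 ω.2).1
    have hst := (hstab' ω.1 ω.2).2
    have hM1 : M ≤ AndersonAux.MminF n ω.1.symm := by
      apply hMmin
      have := AndersonAux.Mpos hn ω.1.symm
      rwa [Equiv.symm_symm] at this
    have hM2 : AndersonAux.MminF n ω.1.symm ≤ M := by
      apply AndersonAux.Mmin_le hn ω.1.symm hper M
      rwa [Equiv.symm_symm]
    have hMeq : M = AndersonAux.MminF n ω.1.symm := le_antisymm hM1 hM2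
    have hde := AndersonAux.fdecomp (m := m) ω.1.symm hcop α
    have heq' : AndersonAux.rhoOf m n ω.1.symm α * m - AndersonAux.gOf m n ω.1.symm α * n
        = r * m - k * n := by
      rw [← hde, ← hMeq]
      exact heq
    have hun := AndersonAux.decomp_unique hn hcop heq'
      (AndersonAux.rho_nonneg hn ω.1.symm α) (AndersonAux.rho_lt hn ω.1.symm α) hr0 hrn
    have hknn := AndersonAux.g_nonneg hn hcop ω.1.symm hper hst α
    refine ⟨by omega, ?_⟩
    show ((AndersonAux.AF m n ω.1.symm α : ℕ) : ℤ) = k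
    rw [AndersonAux.AF, Int.toNat_of_nonneg hknn, hun.2]
end

section
/- In the setting of the Anderson map: for ω m-stable, α ∈ {1,...,n}, and the unique decomposition ω^{-1}(α) - M_ω = rm - kn with r ∈ {0,...,n-1}, the integer k is nonnegative. -/
/-- In the Anderson construction, for `ω` `m`-stable with minimal positive-value
position `M`, `α ∈ {1,…,n}`, and `ω⁻¹(α) - M = r·m - k·n` with `0 ≤ r < n`,
the integer `k` is nonnegative. -/
theorem stmt_8 (m n : ℕ) (hm : 0 < m) (hn : 0 < n) (hcop : Nat.Coprime m n)
    (ω : ℤ ≃ ℤ)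
    (hper : ∀ x : ℤ, ω (x + n) = ω x + n)
    (hsum : 2 * ∑ i ∈ Finset.Icc (1 : ℤ) (n : ℤ), ω i = n * (n + 1))
    (hst : ∀ x : ℤ, ω x < ω (x + m))
    (M : ℤ) (hM1 : 0 < ω M) (hM2 : ∀ i : ℤ, 0 < ω i → M ≤ i)
    (α : ℤ) (hα1 : 1 ≤ α) (hα2 : α ≤ (n : ℤ))
    (r k : ℤ) (hr0 : 0 ≤ r) (hrn : r < n)
    (hdec : ω.symm α - M = r * m - k * n) :
    0 ≤ k := by
  -- periodicity for all integer multiples of n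
  have hpern : ∀ (c : ℤ) (x : ℤ), ω (x + c * n) = ω x + c * n := by
    intro c
    induction c using Int.induction_on with
    | zero => simp
    | succ i ih =>
      intro x
      have h1 : x + ((i : ℤ) + 1) * n = (x + i * n) + n := by ring
      rw [h1, hper, ih]; ring
    | pred i ih =>
      intro x
      have h := hper (x + (-(i : ℤ) - 1) * n)
      have h1 : x + (-(i : ℤ) - 1) * n + n = x + (-(i : ℤ)) * n := by ring
      rw [h1, ih] at h
      linarith [h]
  -- m-stability iterated
  have hmono : ∀ (j : ℕ) (x : ℤ), ω x ≤ ω (x + (j : ℤ) * m) := by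
    intro j
    induction j with
    | zero => intro x; simp
    | succ i ih =>
      intro x
      have h1 : x + ((i : ℤ) + 1) * m = (x + i * m) + m := by ring
      have h2 := hst (x + (i : ℤ) * m)
      have := ih x
      push_cast
      rw [h1]
      linarith
  have hiα : ω (M + r * m - k * n) = α := by
    have : ω.symm α = M + r * m - k * n := by linarith
    rw [← this, Equiv.apply_symm_apply]
  have h3 : ω (M + r * m) = α + k * n := by
    have h1 : M + r * m = (M + r * m - k * n) + k * n := by ring
    rw [h1, hpern, hiα]
  have h4 : ω M ≤ ω (M + r * m) := by
    have h5 := hmono r.toNat M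
    rwa [Int.toNat_of_nonneg hr0] at h5
  by_contra hk
  push_neg at hk
  have hk1 : k ≤ -1 := by omega
  have hnn : (0 : ℤ) < n := by exact_mod_cast hn
  nlinarith [h3, h4, hM1]
end

section
/- Let ω be an m-restricted affine permutation and define SP_ω(i) = #{j > i : 0 < ω(i) - ω(j) < m} for i ∈ ℤ. Then for 1 ≤ i ≤ n: ω(i) < ω(i+1) if and only if SP_ω(i) ≤ SP_ω(i+1). -/
/-- `SP_ω(i) = #{j > i : 0 < ω(i) - ω(j) < m}`. -/
noncomputable def SP (m : ℕ) (ω : ℤ → ℤ) (i : ℤ) : ℕ :=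
  {j : ℤ | i < j ∧ 0 < ω i - ω j ∧ ω i - ω j < (m : ℤ)}.ncard

private lemma iter_le (g : ℤ → ℤ) (m : ℕ)
    (hg : ∀ v, g v < g (v + m)) (v : ℤ) (k : ℕ) : g v ≤ g (v + (k : ℤ) * m) := by
  induction k with
  | zero => simp
  | succ k ih =>
    have h2 := hg (v + (k : ℤ) * m)
    have e : v + (k : ℤ) * m + m = v + ((k : ℕ) + 1 : ℤ) * m := by ring
    rw [e] at h2
    push_cast
    exact le_of_lt (lt_of_le_of_lt ih h2)

private lemma iter_lt (g : ℤ → ℤ) (m : ℕ)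
    (hg : ∀ v, g v < g (v + m)) (v : ℤ) (k : ℕ) (hk : 1 ≤ k) :
    g v < g (v + (k : ℤ) * m) := by
  obtain ⟨j, rfl⟩ := Nat.exists_eq_add_of_le hk
  have h1 := hg v
  have h2 := iter_le g m hg (v + m) j
  have e : v + (m : ℤ) + (j : ℤ) * m = v + ((1 + j : ℕ) : ℤ) * m := by push_cast; ring
  rw [e] at h2
  exact lt_of_lt_of_le h1 h2

-- helper facts about φ v = y - (y - v) % m
private lemma phi_mem (m : ℕ) (hm : 0 < m) (g : ℤ → ℤ)
    (hg : ∀ v, g v < g (v + m)) (t x y : ℤ) (hxy : x < y) (hy : g y ≤ t) :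
    ∀ v ∈ (Finset.Ioo (x - m) x).filter (fun v => t < g v),
      (y - (y - v) % m) ∈ (Finset.Ioo (y - m) y).filter (fun v => t < g v) := by
  intro v hv
  simp only [Finset.mem_filter, Finset.mem_Ioo] at hv ⊢
  obtain ⟨⟨hv1, hv2⟩, hv3⟩ := hv
  have hm0 : (m : ℤ) ≠ 0 := by exact_mod_cast hm.ne'
  have hmpos : (0 : ℤ) < m := by exact_mod_cast hm
  set r := (y - v) % m with hr
  set k := (y - v) / m with hk
  have heq : (m : ℤ) * k + r = y - v := Int.mul_ediv_add_emod (y - v) m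
  have hr0 : 0 ≤ r := Int.emod_nonneg _ hm0
  have hr1 : r < m := Int.emod_lt_of_pos _ hmpos
  have hk0 : 0 ≤ k := Int.ediv_nonneg (by linarith) (by linarith)
  lift k to ℕ using hk0 with k'
  have hle : g v ≤ g (y - r) := by
    have := iter_le g m hg v k'
    have e : v + (k' : ℤ) * m = y - r := by linarith
    rwa [e] at this
  have hrne : r ≠ 0 := by
    intro h0
    rw [h0, sub_zero] at hle
    linarith
  refine ⟨⟨by linarith [lt_of_le_of_ne hr0 (Ne.symm hrne)], by
    have : 0 < r := lt_of_le_of_ne hr0 (Ne.symm hrne); linarith⟩, lt_of_lt_of_le hv3 hle⟩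

private lemma phi_inj (m : ℕ) (hm : 0 < m) (x y : ℤ) :
    Set.InjOn (fun v => y - (y - v) % m) ↑(Finset.Ioo (x - (m : ℤ)) x) := by
  intro v1 h1 v2 h2 h
  simp only [Finset.coe_Ioo, Set.mem_Ioo] at h1 h2
  simp only [sub_right_inj] at h
  have hmod : (y - v1) ≡ (y - v2) [ZMOD (m : ℤ)] := h
  have hdvd : (m : ℤ) ∣ (y - v2) - (y - v1) := hmod.dvd
  have hdvd' : (m : ℤ) ∣ v1 - v2 := by
    have : (y - v2) - (y - v1) = v1 - v2 := by ring
    rwa [this] at hdvd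
  have habs : |v1 - v2| < m := by
    rw [abs_lt]; constructor <;> [linarith [h1.1, h1.2, h2.1, h2.2]; linarith [h1.1, h1.2, h2.1, h2.2]]
  have := Int.eq_zero_of_abs_lt_dvd hdvd' habs
  linarith

private lemma count_le (m : ℕ) (hm : 0 < m) (g : ℤ → ℤ)
    (hg : ∀ v, g v < g (v + m)) (t x y : ℤ) (hxy : x < y) (hy : g y ≤ t) :
    ((Finset.Ioo (x - m) x).filter (fun v => t < g v)).card ≤
    ((Finset.Ioo (y - m) y).filter (fun v => t < g v)).card := by
  apply Finset.card_le_card_of_injOn (fun v => y - (y - v) % m)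
    (phi_mem m hm g hg t x y hxy hy)
  apply (phi_inj m hm x y).mono
  intro v hv
  simp only [Finset.coe_filter, Set.mem_setOf_eq] at hv
  exact Finset.mem_coe.mpr hv.1

private lemma count_lt (m : ℕ) (hm : 0 < m) (g : ℤ → ℤ)
    (hg : ∀ v, g v < g (v + m)) (t x y : ℤ) (hxy : (m : ℤ) < y - x)
    (hy : g y ≤ t) (hx : t ≤ g x) :
    ((Finset.Ioo (x - m) x).filter (fun v => t < g v)).card <
    ((Finset.Ioo (y - m) y).filter (fun v => t < g v)).card := by
  classical
  have hmpos : (0 : ℤ) < m := by exact_mod_cast hm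
  have hm0 : (m : ℤ) ≠ 0 := hmpos.ne'
  have hxy' : x < y := by linarith
  set S := (Finset.Ioo (x - (m:ℤ)) x).filter (fun v => t < g v) with hS
  set T := (Finset.Ioo (y - (m:ℤ)) y).filter (fun v => t < g v) with hT
  set φ : ℤ → ℤ := fun v => y - (y - v) % m with hφ
  have hinj : Set.InjOn φ ↑S := by
    apply (phi_inj m hm x y).mono
    intro v hv
    simp only [hS, Finset.coe_filter, Set.mem_setOf_eq] at hv
    exact Finset.mem_coe.mpr hv.1
  have himg : S.image φ ⊆ T := by
    intro w hw
    simp only [Finset.mem_image] at hw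
    obtain ⟨v, hv, rfl⟩ := hw
    exact phi_mem m hm g hg t x y hxy' hy v hv
  -- the extra element w = y - (y - x) % m
  set r := (y - x) % m with hr
  set k := (y - x) / m with hk
  have heq : (m : ℤ) * k + r = y - x := Int.mul_ediv_add_emod (y - x) m
  have hr0 : 0 ≤ r := Int.emod_nonneg _ hm0
  have hr1 : r < m := Int.emod_lt_of_pos _ hmpos
  have hk1 : 1 ≤ k := by nlinarith
  have hknat : 0 ≤ k := by linarith
  have hgw : g x < g (y - r) := by
    lift k to ℕ using hknat with k'
    have hk1' : 1 ≤ k' := by exact_mod_cast hk1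
    have := iter_lt g m hg x k' hk1'
    have e : x + (k' : ℤ) * m = y - r := by linarith
    rwa [e] at this
  have hrne : r ≠ 0 := by
    intro h0
    rw [h0, sub_zero] at hgw
    linarith
  have hrpos : 0 < r := lt_of_le_of_ne hr0 (Ne.symm hrne)
  have hwT : (y - r) ∈ T := by
    simp only [hT, Finset.mem_filter, Finset.mem_Ioo]
    exact ⟨⟨by linarith, by linarith⟩, by linarith⟩
  have hwnotimg : (y - r) ∉ S.image φ := by
    intro hw
    simp only [Finset.mem_image] at hw
    obtain ⟨v, hv, hveq⟩ := hw
    simp only [hS, Finset.mem_filter, Finset.mem_Ioo] at hv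
    simp only [hφ, sub_right_inj] at hveq
    -- (y - v) % m = (y - x) % m  ⇒ m ∣ x - v, but 0 < x - v < m
    have hmod : (y - v) ≡ (y - x) [ZMOD (m : ℤ)] := hveq
    have hdvd : (m : ℤ) ∣ (y - x) - (y - v) := hmod.dvd
    have hdvd' : (m : ℤ) ∣ v - x := by
      have : (y - x) - (y - v) = v - x := by ring
      rwa [this] at hdvd
    have habs : |v - x| < m := by
      rw [abs_lt]; exact ⟨by linarith [hv.1.1, hv.1.2], by linarith [hv.1.1, hv.1.2]⟩
    have := Int.eq_zero_of_abs_lt_dvd hdvd' habs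
    have : v = x := by linarith
    exact absurd hv.1.2 (by simp [this])
  have h1 : (insert (y - r) (S.image φ)).card = S.card + 1 := by
    rw [Finset.card_insert_of_notMem hwnotimg, Finset.card_image_of_injOn hinj]
  have h2 : insert (y - r) (S.image φ) ⊆ T := by
    intro w hw
    rcases Finset.mem_insert.mp hw with h | h
    · rwa [h]
    · exact himg h
  have := Finset.card_le_card h2
  omega

private lemma SP_eq (m : ℕ) (ω : ℤ ≃ ℤ) (s : ℤ) :
    SP m ω s = ((Finset.Ioo (ω s - m) (ω s)).filter (fun v => s < ω.symm v)).card := by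
  classical
  rw [SP]
  have h1 : {j : ℤ | s < j ∧ 0 < ω s - ω j ∧ ω s - ω j < (m : ℤ)}
      = ω.symm '' ↑((Finset.Ioo (ω s - m) (ω s)).filter (fun v => s < ω.symm v)) := by
    ext j
    simp only [Set.mem_image, Finset.coe_filter, Set.mem_setOf_eq, Finset.mem_Ioo]
    constructor
    · rintro ⟨h1, h2, h3⟩
      exact ⟨ω j, ⟨⟨by linarith, by linarith⟩, by simpa⟩, by simp⟩
    · rintro ⟨v, ⟨⟨hv1, hv2⟩, hv3⟩, rfl⟩
      refine ⟨hv3, by simp; linarith, by simp; linarith⟩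
  rw [h1, Set.ncard_image_of_injective _ ω.symm.injective, Set.ncard_coe_finset]

/-- For an `m`-restricted affine permutation `ω` and `1 ≤ i ≤ n`:
`ω(i) < ω(i+1)` iff `SP_ω(i) ≤ SP_ω(i+1)`. -/
theorem stmt_11 (n m : ℕ) (hn : 0 < n) (hm : 0 < m) (ω : ℤ ≃ ℤ)
    (hper : ∀ x : ℤ, ω (x + n) = ω x + n)
    (hsum : 2 * ∑ i ∈ Finset.Icc (1 : ℤ) (n : ℤ), ω i = n * (n + 1))
    (hres : ∀ i j : ℤ, i < j → ω i - ω j ≠ (m : ℤ)) :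
    ∀ i : ℤ, 1 ≤ i → i ≤ (n : ℤ) →
      (ω i < ω (i + 1) ↔ SP m ω i ≤ SP m ω (i + 1)) := by
  classical
  intro i _ _
  set a := ω i with ha
  set b := ω (i + 1) with hb
  have hmpos : (0 : ℤ) < m := by exact_mod_cast hm
  have hstep : ∀ v : ℤ, ω.symm v < ω.symm (v + m) := by
    intro v
    by_contra h
    push_neg at h
    have hne : ω.symm (v + m) ≠ ω.symm v := by
      intro he
      have := congrArg ω he
      simp only [Equiv.apply_symm_apply] at this
      omega
    have hlt : ω.symm (v + m) < ω.symm v := lt_of_le_of_ne h hne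
    have := hres _ _ hlt
    simp only [Equiv.apply_symm_apply] at this
    omega
  have hσa : ω.symm a = i := ω.symm_apply_apply i
  have hσb : ω.symm b = i + 1 := ω.symm_apply_apply (i + 1)
  have hab : a ≠ b := by
    intro h
    have := ω.injective (ha ▸ hb ▸ h)
    omega
  -- SP (i+1)
  have hSP1 : SP m ω (i + 1)
      = ((Finset.Ioo (b - m) b).filter (fun v => i + 1 < ω.symm v)).card := SP_eq m ω (i + 1)
  -- SP i, rewritten with threshold i+1
  have hSP0 : SP m ω i
      = ((Finset.Ioo (a - m) a).filter (fun v => i + 1 < ω.symm v)).card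
        + (if b ∈ Finset.Ioo (a - (m : ℤ)) a then 1 else 0) := by
    rw [SP_eq m ω i]
    have hcongr : (Finset.Ioo (a - (m:ℤ)) a).filter (fun v => i < ω.symm v)
        = (Finset.Ioo (a - (m:ℤ)) a).filter (fun v => i + 1 < ω.symm v ∨ v = b) := by
      apply Finset.filter_congr
      intro v _
      constructor
      · intro hv
        rcases lt_or_eq_of_le (by omega : i + 1 ≤ ω.symm v) with h | h
        · exact Or.inl h
        · right
          have := congrArg ω h.symm
          simp only [Equiv.apply_symm_apply] at this
          exact this.trans hb.symm
      · rintro (h | rfl)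
        · omega
        · rw [hσb]; omega
    rw [hcongr, Finset.filter_or, Finset.card_union_of_disjoint, Finset.filter_eq']
    · split <;> simp
    · rw [Finset.disjoint_filter]
      rintro v _ hv rfl
      rw [hσb] at hv
      omega
  constructor
  · intro hlt
    rw [hSP0, hSP1]
    have hbnot : b ∉ Finset.Ioo (a - (m : ℤ)) a := by
      simp only [Finset.mem_Ioo, not_and]
      intro _
      linarith
    rw [if_neg hbnot, add_zero]
    exact count_le m hm ω.symm hstep (i + 1) a b hlt (le_of_eq hσb)
  · intro hle
    by_contra h
    push_neg at h
    have hba : b < a := lt_of_le_of_ne h hab.symm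
    have hnm : a - b ≠ (m : ℤ) := hres i (i + 1) (by omega)
    rcases lt_or_gt_of_ne hnm with hlt | hgt
    · -- a - b < m : b ∈ window, C(b) ≤ C(a)
      have hbmem : b ∈ Finset.Ioo (a - (m : ℤ)) a := by
        simp only [Finset.mem_Ioo]
        exact ⟨by linarith, hba⟩
      have hc : ((Finset.Ioo (b - (m:ℤ)) b).filter (fun v => i + 1 < ω.symm v)).card
          ≤ ((Finset.Ioo (a - (m:ℤ)) a).filter (fun v => i + 1 < ω.symm v)).card :=
        count_le m hm ω.symm hstep (i + 1) b a hba (by rw [hσa]; omega)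
      rw [hSP0, hSP1, if_pos hbmem] at hle
      omega
    · -- a - b > m : strict
      have hc : ((Finset.Ioo (b - (m:ℤ)) b).filter (fun v => i + 1 < ω.symm v)).card
          < ((Finset.Ioo (a - (m:ℤ)) a).filter (fun v => i + 1 < ω.symm v)).card :=
        count_lt m hm ω.symm hstep (i + 1) b a (by linarith) (by rw [hσa]; omega)
          (le_of_eq hσb.symm)
      rw [hSP0, hSP1] at hle
      omega
end

section
/- Let ω be an m-restricted affine permutation, SP_ω(i) = #{j > i : 0 < ω(i) - ω(j) < m}. If 1 ≤ i ≤ n, i < j, and ω(i) > ω(j), then SP_ω(i) > SP_ω(j). -/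
lemma sp_aux (m : ℕ) (hm : 0 < m) (ω : ℤ ≃ ℤ)
    (hres : ∀ i j : ℤ, i < j → ω i - ω j ≠ (m : ℤ))
    (i j : ℤ) (hij : i < j) (hlt : ω j < ω i) :
    SP m ω j < SP m ω i := by
  have hm' : (0:ℤ) < m := by exact_mod_cast hm
  -- If ω a - ω b = m then b < a.
  have factA : ∀ a b : ℤ, ω a - ω b = (m:ℤ) → b < a := by
    intro a b h
    rcases lt_trichotomy a b with h1 | h1 | h1
    · exact absurd h (hres a b h1)
    · subst h1; omega
    · exact h1
  -- ω.symm is increasing along progressions with step m.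
  have mono : ∀ (t : ℕ) (v : ℤ), ω.symm v ≤ ω.symm (v + m * t) := by
    intro t
    induction t with
    | zero => intro v; simp
    | succ t ih =>
      intro v
      have h2 : ω.symm (v + m * t) < ω.symm (v + m * (t+1:ℕ)) := by
        apply factA
        rw [Equiv.apply_symm_apply, Equiv.apply_symm_apply]
        push_cast; ring
      exact le_trans (ih v) (le_of_lt h2)
  set I := ω i with hI
  set ρ : ℤ → ℤ := fun v => v + m * ((I - 1 - v) / m) with hρ
  have hρ_spec : ∀ v : ℤ, v < I → I - m ≤ ρ v ∧ ρ v < I := by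
    intro v hv
    have hdm := Int.mul_ediv_add_emod (I - 1 - v) m
    have h1 : 0 ≤ (I - 1 - v) % m := Int.emod_nonneg _ (by omega)
    have h2 : (I - 1 - v) % m < m := Int.emod_lt_of_pos _ hm'
    have : ρ v = v + m * ((I - 1 - v) / m) := rfl
    constructor <;> linarith
  have hcong : ∀ v : ℤ, (m:ℤ) ∣ ρ v - v := by
    intro v
    exact ⟨(I - 1 - v) / m, by simp only [hρ]; ring⟩
  -- key: if v < I and ω⁻¹ v > i, then ω⁻¹ (ρ v) ∈ S_i
  have hkey : ∀ v : ℤ, v < I → i < ω.symm v →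
      ω.symm (ρ v) ∈ {k : ℤ | i < k ∧ 0 < ω i - ω k ∧ ω i - ω k < (m:ℤ)} := by
    intro v hv hv2
    have hq0 : 0 ≤ (I - 1 - v) / m := Int.ediv_nonneg (by omega) (le_of_lt hm')
    obtain ⟨t, ht⟩ := Int.eq_ofNat_of_zero_le hq0
    have hmono : ω.symm v ≤ ω.symm (ρ v) := by
      have h := mono t v
      have : ρ v = v + m * (t:ℤ) := by simp only [hρ]; rw [ht]
      rw [this]; exact h
    have hgt : i < ω.symm (ρ v) := lt_of_lt_of_le hv2 hmono
    have hωρ : ω (ω.symm (ρ v)) = ρ v := Equiv.apply_symm_apply ω _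
    obtain ⟨hb1, hb2⟩ := hρ_spec v hv
    have hne : ρ v ≠ I - m := by
      intro hEq
      exact hres i (ω.symm (ρ v)) hgt (by rw [hωρ, hEq, ← hI]; ring)
    refine ⟨hgt, ?_, ?_⟩ <;> rw [hωρ, ← hI] <;> omega
  set Sj := {k : ℤ | j < k ∧ 0 < ω j - ω k ∧ ω j - ω k < (m:ℤ)} with hSj
  set Si := {k : ℤ | i < k ∧ 0 < ω i - ω k ∧ ω i - ω k < (m:ℤ)} with hSi
  set φ : ℤ → ℤ := fun k => ω.symm (ρ (ω k)) with hφ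
  have hmapsto : ∀ k ∈ Sj, φ k ∈ Si := by
    intro k hk
    obtain ⟨hk1, hk2, hk3⟩ := hk
    apply hkey
    · omega
    · rw [Equiv.symm_apply_apply]; omega
  have heSi : φ j ∈ Si := by
    apply hkey
    · omega
    · rw [Equiv.symm_apply_apply]; exact hij
  -- injectivity tool: ρ (ω k) = ρ (ω k') with |ω k - ω k'| < m forces ω k = ω k'
  have hsep : ∀ v v' : ℤ, ρ v = ρ v' → |v - v'| < m → v = v' := by
    intro v v' hEq habs
    obtain ⟨c, hc⟩ := hcong v
    obtain ⟨c', hc'⟩ := hcong v'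
    have hd : (m:ℤ) ∣ v - v' := ⟨c' - c, by rw [mul_sub]; linarith⟩
    have := Int.eq_zero_of_abs_lt_dvd hd habs
    omega
  have hinj : Set.InjOn φ Sj := by
    intro k hk k' hk' hEq
    obtain ⟨_, hk2, hk3⟩ := hk
    obtain ⟨_, hk2', hk3'⟩ := hk'
    have h1 : ρ (ω k) = ρ (ω k') := by
      have h2 := congrArg ω hEq
      simpa only [hφ, Equiv.apply_symm_apply] using h2
    have h0 : ω k = ω k' := hsep _ _ h1 (by rw [abs_lt]; omega)
    exact ω.injective h0
  have hnotin : φ j ∉ φ '' Sj := by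
    rintro ⟨k, hk, hEq⟩
    obtain ⟨_, hk2, hk3⟩ := hk
    have h1 : ρ (ω k) = ρ (ω j) := by
      have h2 := congrArg ω hEq
      simpa only [hφ, Equiv.apply_symm_apply] using h2
    have h0 : ω k = ω j := hsep _ _ h1 (by rw [abs_lt]; omega)
    omega
  have hfin : Si.Finite := by
    apply Set.Finite.subset ((Set.finite_Ioo (I - m) I).image ω.symm)
    rintro k ⟨hk1, hk2, hk3⟩
    exact ⟨ω k, ⟨by rw [← hI] at *; omega, by rw [← hI] at *; omega⟩,
      ω.symm_apply_apply k⟩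
  have hssub : φ '' Sj ⊂ Si := by
    rw [Set.ssubset_iff_of_subset (by rintro x ⟨k, hk, rfl⟩; exact hmapsto k hk)]
    exact ⟨φ j, heSi, hnotin⟩
  calc SP m ω j = Sj.ncard := rfl
    _ = (φ '' Sj).ncard := (Set.ncard_image_of_injOn hinj).symm
    _ < Si.ncard := Set.ncard_lt_ncard hssub hfin
    _ = SP m ω i := rfl

/-- For an `m`-restricted affine permutation `ω`: if `1 ≤ i ≤ n`, `i < j` and
`ω(i) > ω(j)`, then `SP_ω(i) > SP_ω(j)`. -/
theorem stmt_12 (n m : ℕ) (hn : 0 < n) (hm : 0 < m) (ω : ℤ ≃ ℤ)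
    (hper : ∀ x : ℤ, ω (x + n) = ω x + n)
    (hsum : 2 * ∑ i ∈ Finset.Icc (1 : ℤ) (n : ℤ), ω i = n * (n + 1))
    (hres : ∀ i j : ℤ, i < j → ω i - ω j ≠ (m : ℤ)) :
    ∀ i j : ℤ, 1 ≤ i → i ≤ (n : ℤ) → i < j → ω j < ω i →
      SP m ω j < SP m ω i := by
  intro i j _ _ hij hlt
  exact sp_aux m hm ω hres i j hij hlt
end

section
/- Let ω be m-restricted with SP_ω(i) = #{j > i : 0 < ω(i) - ω(j) < m}, and let 1 ≤ i, j ≤ n. If SP_ω(i) = SP_ω(j) then |ω(i) - ω(j)| < n. -/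
/-- Auxiliary count in value space: `Qaux m σ x = #{v ∈ (x-m, x) : σ x < σ v}`. -/
noncomputable def Qaux (m : ℕ) (σ : ℤ → ℤ) (x : ℤ) : ℕ :=
  ((Finset.Ioo (x - (m : ℤ)) x).filter (fun v => σ x < σ v)).card

lemma chain_aux (m : ℕ) (σ : ℤ → ℤ) (hst : ∀ v : ℤ, σ v < σ (v + (m : ℤ))) :
    ∀ (t : ℕ) (v : ℤ), σ v ≤ σ (v + (m : ℤ) * t) := by
  intro t
  induction t with
  | zero => intro v; simp
  | succ t ih =>
    intro v
    have h2 := hst (v + (m : ℤ) * t)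
    have he : v + (m : ℤ) * t + (m : ℤ) = v + (m : ℤ) * ((t : ℕ) + 1 : ℕ) := by
      push_cast; ring
    rw [he] at h2
    exact (ih v).trans h2.le

lemma keyA (m : ℕ) (hm : 0 < m) (σ : ℤ → ℤ)
    (hst : ∀ v : ℤ, σ v < σ (v + (m : ℤ))) {x y : ℤ} (hyx : y < x) (hσ : σ x < σ y) :
    Qaux m σ y < Qaux m σ x := by
  classical
  have hmpos : (0 : ℤ) < m := by exact_mod_cast hm
  set A : Finset ℤ := (Finset.Ioc (y - (m : ℤ)) y).filter (fun u => σ x < σ u) with hA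
  have hyA : y ∈ A := by
    rw [hA, Finset.mem_filter, Finset.mem_Ioc]
    exact ⟨⟨by omega, le_refl y⟩, hσ⟩
  have h1 : Qaux m σ y < A.card := by
    unfold Qaux
    set S : Finset ℤ := (Finset.Ioo (y - (m : ℤ)) y).filter (fun v => σ y < σ v) with hS
    have hynotS : y ∉ S := by
      rw [hS, Finset.mem_filter, Finset.mem_Ioo]
      intro h; exact absurd h.1.2 (lt_irrefl y)
    have hsub : insert y S ⊆ A := by
      intro u hu
      rcases Finset.mem_insert.mp hu with h | h
      · rw [h]; exact hyA
      · rw [hS, Finset.mem_filter, Finset.mem_Ioo] at h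
        rw [hA, Finset.mem_filter, Finset.mem_Ioc]
        exact ⟨⟨h.1.1, h.1.2.le⟩, hσ.trans h.2⟩
    have hcard := Finset.card_le_card hsub
    rw [Finset.card_insert_of_notMem hynotS] at hcard
    omega
  have h2 : A.card ≤ Qaux m σ x := by
    unfold Qaux
    apply Finset.card_le_card_of_injOn (fun u => x - (x - u) % (m : ℤ))
    · intro u hu
      rw [hA, Finset.mem_coe, Finset.mem_filter, Finset.mem_Ioc] at hu
      obtain ⟨⟨hu1, hu2⟩, hu3⟩ := hu
      set r := (x - u) % (m : ℤ) with hr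
      have hr0 : 0 ≤ r := Int.emod_nonneg _ (by exact_mod_cast hm.ne')
      have hr1 : r < m := Int.emod_lt_of_pos _ hmpos
      have hdm := Int.emod_add_mul_ediv (x - u) (m : ℤ)
      have hq0 : 0 ≤ (x - u) / (m : ℤ) := Int.ediv_nonneg (by omega) hmpos.le
      have hσle : σ u ≤ σ (x - r) := by
        have hgu : x - r = u + (m : ℤ) * ((x - u) / (m : ℤ)) := by
          rw [hr]; linarith [hdm]
        rw [hgu]
        lift (x - u) / (m : ℤ) to ℕ using hq0 with t ht
        exact chain_aux m σ hst t u
      have hne : x - r ≠ x := by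
        intro he
        rw [he] at hσle
        exact absurd (hu3.trans_le hσle) (lt_irrefl _)
      rw [Finset.mem_coe, Finset.mem_filter, Finset.mem_Ioo]
      beta_reduce
      exact ⟨⟨by omega, by omega⟩, hu3.trans_le hσle⟩
    · intro u1 hu1 u2 hu2 he
      simp only [hA, Finset.coe_filter, Set.mem_setOf_eq, Finset.mem_Ioc] at hu1 hu2
      simp only at he
      have h3 : (x - u1) % (m : ℤ) = (x - u2) % (m : ℤ) := by linarith
      have h4 : ((x - u1) - (x - u2)) % (m : ℤ) = 0 :=
        Int.emod_eq_emod_iff_emod_sub_eq_zero.mp h3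
      have h5 : (m : ℤ) ∣ u2 - u1 := by
        have := Int.dvd_of_emod_eq_zero h4
        have heq : (x - u1) - (x - u2) = u2 - u1 := by ring
        rwa [heq] at this
      obtain ⟨c, hc⟩ := h5
      have hb1 : (m : ℤ) * (-1) < (m : ℤ) * c := by
        rw [← hc]; omega
      have hb2 : (m : ℤ) * c < (m : ℤ) * 1 := by
        rw [← hc]; omega
      have hc1 : (-1 : ℤ) < c := lt_of_mul_lt_mul_left hb1 hmpos.le
      have hc2 : c < 1 := lt_of_mul_lt_mul_left hb2 hmpos.le
      have : c = 0 := by omega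
      rw [this, mul_zero] at hc
      omega
  omega

/-- For an `m`-restricted affine permutation `ω` and `1 ≤ i, j ≤ n`:
if `SP_ω(i) = SP_ω(j)` then `|ω(i) - ω(j)| < n`. -/
theorem stmt_13 (n m : ℕ) (hn : 0 < n) (hm : 0 < m) (ω : ℤ ≃ ℤ)
    (hper : ∀ x : ℤ, ω (x + n) = ω x + n)
    (hsum : 2 * ∑ i ∈ Finset.Icc (1 : ℤ) (n : ℤ), ω i = n * (n + 1))
    (hres : ∀ i j : ℤ, i < j → ω i - ω j ≠ (m : ℤ)) :
    ∀ i j : ℤ, 1 ≤ i → i ≤ (n : ℤ) → 1 ≤ j → j ≤ (n : ℤ) →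
      SP m ω i = SP m ω j → |ω i - ω j| < (n : ℤ) := by
  classical
  have hmz : (0 : ℤ) < m := by exact_mod_cast hm
  have hσper : ∀ v : ℤ, ω.symm (v + (n : ℤ)) = ω.symm v + n := by
    intro v
    apply ω.injective
    rw [Equiv.apply_symm_apply, hper, Equiv.apply_symm_apply]
  have hst : ∀ v : ℤ, ω.symm v < ω.symm (v + (m : ℤ)) := by
    intro v
    rcases lt_trichotomy (ω.symm v) (ω.symm (v + (m : ℤ))) with h | h | h
    · exact h
    · exfalso
      have := congrArg ω h
      rw [Equiv.apply_symm_apply, Equiv.apply_symm_apply] at this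
      omega
    · exfalso
      have h2 := hres _ _ h
      rw [Equiv.apply_symm_apply, Equiv.apply_symm_apply] at h2
      omega
  have hSPQ : ∀ i : ℤ, SP m ω i = Qaux m ω.symm (ω i) := by
    intro i
    unfold SP Qaux
    have hset : {j : ℤ | i < j ∧ 0 < ω i - ω j ∧ ω i - ω j < (m : ℤ)}
        = ω.symm '' ↑((Finset.Ioo (ω i - (m : ℤ)) (ω i)).filter
            (fun v => ω.symm (ω i) < ω.symm v)) := by
      ext k
      simp only [Set.mem_setOf_eq, Set.mem_image, Finset.mem_coe, Finset.mem_filter,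
        Finset.mem_Ioo, Equiv.symm_apply_apply]
      constructor
      · rintro ⟨h1, h2, h3⟩
        exact ⟨ω k, ⟨⟨by omega, by omega⟩, by simpa using h1⟩, by simp⟩
      · rintro ⟨v, ⟨⟨hv1, hv2⟩, hv3⟩, rfl⟩
        refine ⟨hv3, ?_, ?_⟩ <;> rw [Equiv.apply_symm_apply] <;> omega
    rw [hset, Set.ncard_image_of_injective _ ω.symm.injective, Set.ncard_coe_finset]
  have hQper : ∀ y : ℤ, Qaux m ω.symm (y + (n : ℤ)) = Qaux m ω.symm y := by
    intro y
    unfold Qaux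
    apply Finset.card_bij' (fun u _ => u - (n : ℤ)) (fun u _ => u + (n : ℤ))
    · intro a ha
      rw [Finset.mem_filter, Finset.mem_Ioo] at ha ⊢
      have e1 : ω.symm a = ω.symm (a - (n : ℤ)) + n := by
        rw [← hσper]; ring_nf
      have e2 := hσper y
      constructor
      · omega
      · omega
    · intro a ha
      rw [Finset.mem_filter, Finset.mem_Ioo] at ha ⊢
      have e1 := hσper a
      have e2 := hσper y
      constructor
      · omega
      · omega
    · intro a _; ring
    · intro a _; ring
  have key : ∀ i j : ℤ, 1 ≤ i → i ≤ (n : ℤ) → 1 ≤ j → ω j + n ≤ ω i →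
      SP m ω j < SP m ω i := by
    intro i j hi1 hi2 hj1 hle
    rw [hSPQ i, hSPQ j, ← hQper (ω j)]
    have hσx : ω.symm (ω i) = i := ω.symm_apply_apply i
    have hσy : ω.symm (ω j + (n : ℤ)) = j + n := by
      rw [hσper, ω.symm_apply_apply]
    apply keyA m hm ω.symm hst
    · rcases lt_or_eq_of_le hle with h | h
      · exact h
      · exfalso
        have : i = j + (n : ℤ) := by rw [← hσx, ← hσy, h]
        omega
    · rw [hσx, hσy]; omega
  intro i j hi1 hi2 hj1 hj2 hSP
  by_contra hcon
  push_neg at hcon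
  rcases le_abs.mp hcon with h | h
  · exact absurd hSP (Nat.ne_of_gt (key i j hi1 hi2 hj1 (by omega)))
  · exact absurd hSP.symm (Nat.ne_of_gt (key j i hj1 hj2 hi1 (by omega)))
end

section
/- Let ω be m-restricted with 0 < ω(i) - ω(i+1) < m, and set u = ω s_i (so u swaps the values at positions congruent to i and i+1 mod n). Then SP_u(i) = SP_ω(i+1), SP_u(i+1) = SP_ω(i) - 1, and SP_u(j) = SP_ω(j) for j not congruent to i or i+1 mod n, where SP_ω(i) = #{j > i : 0 < ω(i) - ω(j) < m}. -/
/-- Let `ω` be `m`-restricted with `0 < ω(i) - ω(i+1) < m`, and `u = ω ∘ sᵢ`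
where `sᵢ` swaps `i + tn ↔ i + 1 + tn`. Then `SP_u(i) = SP_ω(i+1)`,
`SP_u(i+1) = SP_ω(i) - 1`, and `SP_u(j) = SP_ω(j)` for `j ≢ i, i+1 (mod n)`. -/
theorem stmt_14 (n m : ℕ) (hn : 0 < n) (hm : 0 < m) (ω : ℤ ≃ ℤ)
    (hper : ∀ x : ℤ, ω (x + n) = ω x + n)
    (hsum : 2 * ∑ i ∈ Finset.Icc (1 : ℤ) (n : ℤ), ω i = n * (n + 1))
    (hres : ∀ a b : ℤ, a < b → ω a - ω b ≠ (m : ℤ))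
    (i : ℤ) (h1 : 0 < ω i - ω (i + 1)) (h2 : ω i - ω (i + 1) < (m : ℤ))
    (s : ℤ → ℤ)
    (hs : ∀ x : ℤ, s x =
      if x % n = i % n then x + 1
      else if x % n = (i + 1) % n then x - 1 else x) :
    SP m (⇑ω ∘ s) i = SP m (⇑ω) (i + 1) ∧
    SP m (⇑ω ∘ s) (i + 1) + 1 = SP m (⇑ω) i ∧
    (∀ j : ℤ, j % n ≠ i % n → j % n ≠ (i + 1) % n →
      SP m (⇑ω ∘ s) j = SP m (⇑ω) j) := by
  by_cases hni : i % (n : ℤ) = (i + 1) % (n : ℤ)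
  · -- then n = 1, contradiction with h1
    exfalso
    have hd : (n : ℤ) ∣ (i + 1) - i := Int.ModEq.dvd hni
    have h1' : (n : ℤ) ∣ 1 := by simpa using hd
    have hle := Int.le_of_dvd one_pos h1'
    have hge : (1 : ℤ) ≤ (n : ℤ) := by exact_mod_cast hn
    have hn1 : (n : ℤ) = 1 := le_antisymm hle hge
    have hp := hper i
    rw [hn1] at hp
    omega
  -- main case: residues of i and i+1 are distinct mod n
  have hn2 : (2 : ℤ) ≤ (n : ℤ) := by
    rcases Nat.lt_or_ge n 2 with h | h
    · exfalso
      have : n = 1 := by omega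
      subst this
      exact hni (by simp [Int.emod_one])
    · exact_mod_cast h
  have hmem : ∀ x y : ℤ, x % (n : ℤ) = y % (n : ℤ) ↔ (n : ℤ) ∣ x - y := by
    intro x y
    exact ⟨fun h => Int.ModEq.dvd (Int.ModEq.symm h), fun h => (Int.modEq_iff_dvd.mpr h).symm⟩
  have hsame : ∀ x : ℤ, x % (n : ℤ) = i % (n : ℤ) → s x = x + 1 := by
    intro x hx; rw [hs x, if_pos hx]
  have hnext : ∀ x : ℤ, x % (n : ℤ) = (i + 1) % (n : ℤ) → s x = x - 1 := by
    intro x hx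
    rw [hs x, if_neg (fun h => hni (h.symm.trans hx)), if_pos hx]
  have hoth : ∀ x : ℤ, x % (n : ℤ) ≠ i % (n : ℤ) → x % (n : ℤ) ≠ (i + 1) % (n : ℤ) →
      s x = x := by
    intro x ha hb; rw [hs x, if_neg ha, if_neg hb]
  -- gap lemma
  have hgap : ∀ x y : ℤ, (n : ℤ) ∣ x - y → y < x → y + 2 ≤ x := by
    intro x y hd hlt
    have := Int.le_of_dvd (by omega) hd
    omega
  -- involution
  have hinv : ∀ x : ℤ, s (s x) = x := by
    intro x
    by_cases hx : x % (n : ℤ) = i % (n : ℤ)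
    · rw [hsame x hx]
      have hx1 : (x + 1) % (n : ℤ) = (i + 1) % (n : ℤ) := by
        rw [hmem] at hx ⊢
        rw [show x + 1 - (i + 1) = x - i by ring]
        exact hx
      rw [hnext _ hx1]; ring
    · by_cases hx' : x % (n : ℤ) = (i + 1) % (n : ℤ)
      · rw [hnext x hx']
        have hx1 : (x - 1) % (n : ℤ) = i % (n : ℤ) := by
          rw [hmem] at hx' ⊢
          rw [show x - 1 - i = x - (i + 1) by ring]
          exact hx'
        rw [hsame _ hx1]; ring
      · rw [hoth x hx hx', hoth x hx hx']
  have hinj : Function.Injective s := Function.LeftInverse.injective hinv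
  have hsi : s i = i + 1 := hsame i rfl
  have hsi1 : s (i + 1) = i := by rw [hnext (i + 1) rfl]; ring
  -- finiteness of SP sets for ω
  have hfin : ∀ x : ℤ, {j : ℤ | x < j ∧ 0 < ω x - ω j ∧ ω x - ω j < (m : ℤ)}.Finite := by
    intro x
    apply Set.Finite.subset
      (Set.Finite.preimage (Set.injOn_of_injective ω.injective) (Set.finite_Ioo (ω x - m) (ω x)))
    intro j hj
    simp only [Set.mem_preimage, Set.mem_Ioo]
    obtain ⟨_, hb, hc⟩ := hj
    constructor <;> omega
  -- Part 1
  have part1 : SP m (⇑ω ∘ s) i = SP m (⇑ω) (i + 1) := by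
    have hset : {j : ℤ | i < j ∧ 0 < (⇑ω ∘ s) i - (⇑ω ∘ s) j ∧ (⇑ω ∘ s) i - (⇑ω ∘ s) j < (m : ℤ)}
        = s '' {j : ℤ | i + 1 < j ∧ 0 < ω (i + 1) - ω j ∧ ω (i + 1) - ω j < (m : ℤ)} := by
      ext j
      simp only [Set.mem_setOf_eq, Set.mem_image, Function.comp_apply, hsi]
      constructor
      · rintro ⟨hj, hb, hc⟩
        refine ⟨s j, ⟨?_, hb, hc⟩, hinv j⟩
        -- show i + 1 < s j
        by_cases hx : j % (n : ℤ) = i % (n : ℤ)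
        · have := hgap j i ((hmem j i).mp hx) hj
          rw [hsame j hx]; omega
        · by_cases hx' : j % (n : ℤ) = (i + 1) % (n : ℤ)
          · have hne : j ≠ i + 1 := by
              rintro rfl
              rw [hsi1] at hb
              omega
            have hlt : i + 1 < j := by
              rcases lt_or_ge (i + 1) j with h | h
              · exact h
              · exfalso; exact hne (by omega)
            have := hgap j (i + 1) ((hmem j _).mp hx') hlt
            rw [hnext j hx']; omega
          · have hne : j ≠ i + 1 := fun h => hx' (h ▸ rfl)
            rw [hoth j hx hx']; omega
      · rintro ⟨k, ⟨hk, hb, hc⟩, rfl⟩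
        refine ⟨?_, by rw [hinv k]; exact hb, by rw [hinv k]; exact hc⟩
        by_cases hx : k % (n : ℤ) = i % (n : ℤ)
        · rw [hsame k hx]; omega
        · by_cases hx' : k % (n : ℤ) = (i + 1) % (n : ℤ)
          · rw [hnext k hx']; omega
          · rw [hoth k hx hx']; omega
    rw [SP, SP, hset, Set.ncard_image_of_injective _ hinj]
  -- Part 2
  have part2 : SP m (⇑ω ∘ s) (i + 1) + 1 = SP m (⇑ω) i := by
    have hmemB : i + 1 ∈ {j : ℤ | i < j ∧ 0 < ω i - ω j ∧ ω i - ω j < (m : ℤ)} := by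
      exact ⟨by omega, h1, h2⟩
    have hset : s '' {j : ℤ | i + 1 < j ∧ 0 < (⇑ω ∘ s) (i + 1) - (⇑ω ∘ s) j ∧
          (⇑ω ∘ s) (i + 1) - (⇑ω ∘ s) j < (m : ℤ)}
        = {j : ℤ | i < j ∧ 0 < ω i - ω j ∧ ω i - ω j < (m : ℤ)} \ {i + 1} := by
      ext k
      simp only [Set.mem_image, Set.mem_setOf_eq, Set.mem_diff, Set.mem_singleton_iff,
        Function.comp_apply, hsi1]
      constructor
      · rintro ⟨j, ⟨hj, hb, hc⟩, rfl⟩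
        by_cases hx : j % (n : ℤ) = i % (n : ℤ)
        · have := hgap j i ((hmem j i).mp hx) (by omega)
          rw [hsame j hx] at hb hc ⊢
          exact ⟨⟨by omega, hb, hc⟩, by omega⟩
        · by_cases hx' : j % (n : ℤ) = (i + 1) % (n : ℤ)
          · have := hgap j (i + 1) ((hmem j _).mp hx') hj
            rw [hnext j hx'] at hb hc ⊢
            exact ⟨⟨by omega, hb, hc⟩, by omega⟩
          · rw [hoth j hx hx'] at hb hc ⊢
            exact ⟨⟨by omega, hb, hc⟩, by omega⟩
      · rintro ⟨⟨hk, hb, hc⟩, hne⟩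
        refine ⟨s k, ⟨?_, by rw [hinv k]; exact hb, by rw [hinv k]; exact hc⟩, hinv k⟩
        by_cases hx : k % (n : ℤ) = i % (n : ℤ)
        · have := hgap k i ((hmem k i).mp hx) hk
          rw [hsame k hx]; omega
        · by_cases hx' : k % (n : ℤ) = (i + 1) % (n : ℤ)
          · have hlt : i + 1 < k := by
              rcases lt_or_ge (i + 1) k with h | h
              · exact h
              · exfalso; exact hne (by omega)
            have := hgap k (i + 1) ((hmem k _).mp hx') hlt
            rw [hnext k hx']; omega
          · have : k ≠ i + 1 := fun h => hx' (h ▸ rfl)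
            rw [hoth k hx hx']; omega
    rw [SP, SP, ← Set.ncard_image_of_injective _ hinj, hset,
      Set.ncard_diff_singleton_add_one hmemB (hfin i)]
  refine ⟨part1, part2, ?_⟩
  -- Part 3
  intro j hji hji1
  have hmono : ∀ x : ℤ, j < x → j < s x := by
    intro x hx
    by_cases ha : x % (n : ℤ) = i % (n : ℤ)
    · rw [hsame x ha]; omega
    · by_cases hb : x % (n : ℤ) = (i + 1) % (n : ℤ)
      · have hne : x ≠ j + 1 := by
          rintro rfl
          apply hji
          rw [hmem] at hb ⊢
          have : j + 1 - (i + 1) = j - i := by ring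
          rw [← this]; exact hb
        rw [hnext x hb]; omega
      · rw [hoth x ha hb]; omega
  have hsj : s j = j := hoth j hji hji1
  have hset : {k : ℤ | j < k ∧ 0 < (⇑ω ∘ s) j - (⇑ω ∘ s) k ∧ (⇑ω ∘ s) j - (⇑ω ∘ s) k < (m : ℤ)}
      = s '' {k : ℤ | j < k ∧ 0 < ω j - ω k ∧ ω j - ω k < (m : ℤ)} := by
    ext k
    simp only [Set.mem_setOf_eq, Set.mem_image, Function.comp_apply, hsj]
    constructor
    · rintro ⟨hk, hb, hc⟩
      exact ⟨s k, ⟨hmono k hk, hb, hc⟩, hinv k⟩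
    · rintro ⟨x, ⟨hx, hb, hc⟩, rfl⟩
      exact ⟨hmono x hx, by rw [hinv x]; exact hb, by rw [hinv x]; exact hc⟩
  rw [SP, SP, hset, Set.ncard_image_of_injective _ hinj]
end

section
/- Let ω be m-restricted with m < ω(i) - ω(i+1), and u = ω s_i. Then SP_u(i) = SP_ω(i+1), SP_u(i+1) = SP_ω(i), and SP_u(j) = SP_ω(j) for j not congruent to i, i+1 mod n. -/
private lemma aux_ncard (s : ℤ → ℤ) (hss : ∀ x, s (s x) = x) (P : ℤ → Prop) (a b : ℤ)
    (hfwd : ∀ j, a < j → P (s j) → b < s j)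
    (hbwd : ∀ k, b < k → P k → a < s k) :
    {j : ℤ | a < j ∧ P (s j)}.ncard = {k : ℤ | b < k ∧ P k}.ncard := by
  have hinj : Function.Injective s := Function.LeftInverse.injective hss
  have himg : s '' {j : ℤ | a < j ∧ P (s j)} = {k : ℤ | b < k ∧ P k} := by
    ext k
    constructor
    · rintro ⟨j, ⟨hj, hP⟩, rfl⟩
      exact ⟨hfwd j hj hP, hP⟩
    · rintro ⟨hk, hP⟩
      refine ⟨s k, ⟨hbwd k hk hP, ?_⟩, hss k⟩
      rw [hss]; exact hP
  rw [← himg, Set.ncard_image_of_injective _ hinj]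

/-- Let `ω` be `m`-restricted with `m < ω(i) - ω(i+1)`, and `u = ω ∘ sᵢ`.
Then `SP_u(i) = SP_ω(i+1)`, `SP_u(i+1) = SP_ω(i)`, and `SP_u(j) = SP_ω(j)`
for `j ≢ i, i+1 (mod n)`. -/
theorem stmt_15 (n m : ℕ) (hn : 0 < n) (hm : 0 < m) (ω : ℤ ≃ ℤ)
    (hper : ∀ x : ℤ, ω (x + n) = ω x + n)
    (hsum : 2 * ∑ i ∈ Finset.Icc (1 : ℤ) (n : ℤ), ω i = n * (n + 1))
    (hres : ∀ a b : ℤ, a < b → ω a - ω b ≠ (m : ℤ))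
    (i : ℤ) (h1 : (m : ℤ) < ω i - ω (i + 1))
    (s : ℤ → ℤ)
    (hs : ∀ x : ℤ, s x =
      if x % n = i % n then x + 1
      else if x % n = (i + 1) % n then x - 1 else x) :
    SP m (⇑ω ∘ s) i = SP m (⇑ω) (i + 1) ∧
    SP m (⇑ω ∘ s) (i + 1) = SP m (⇑ω) i ∧
    (∀ j : ℤ, j % n ≠ i % n → j % n ≠ (i + 1) % n →
      SP m (⇑ω ∘ s) j = SP m (⇑ω) j) := by
  have hm0 : (0 : ℤ) ≤ (m : ℤ) := Int.natCast_nonneg m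
  -- n ≥ 2
  have hn2 : 2 ≤ n := by
    by_contra h
    have hn1 : n = 1 := by omega
    have hp := hper i
    rw [hn1] at hp
    push_cast at hp
    linarith
  have hn2' : (2 : ℤ) ≤ (n : ℤ) := by exact_mod_cast hn2
  -- basic mod arithmetic helpers
  have hstep : ∀ a b : ℤ, a % n = b % n → (a + 1) % n = (b + 1) % n := by
    intro a b h
    rw [Int.add_emod, h, ← Int.add_emod]
  have hsub : ∀ a b : ℤ, a % n = b % n → (a - 1) % n = (b - 1) % n := by
    intro a b h
    rw [Int.sub_emod, h, ← Int.sub_emod]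
  have hstep' : ∀ a b : ℤ, (a + 1) % n = (b + 1) % n → a % n = b % n := by
    intro a b h
    have := hsub (a + 1) (b + 1) h
    simpa using this
  have hge : ∀ a b : ℤ, a % n = b % n → b < a → b + n ≤ a := by
    intro a b h hlt
    have hd : (n : ℤ) ∣ a - b :=
      Int.dvd_of_emod_eq_zero (Int.emod_eq_emod_iff_emod_sub_eq_zero.mp h)
    have := Int.le_of_dvd (by omega) hd
    omega
  have hmodne : i % n ≠ (i + 1) % n := by
    intro h
    have hd : (n : ℤ) ∣ (i + 1) - i :=
      Int.dvd_of_emod_eq_zero (Int.emod_eq_emod_iff_emod_sub_eq_zero.mp h.symm)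
    have h1' : (n : ℤ) ∣ 1 := by
      have : (i + 1) - i = 1 := by ring
      rwa [this] at hd
    have := Int.le_of_dvd one_pos h1'
    omega
  have hsi : s i = i + 1 := by rw [hs, if_pos rfl]
  have hsi1 : s (i + 1) = i := by
    rw [hs, if_neg (Ne.symm hmodne), if_pos rfl]; ring
  have hss : ∀ x, s (s x) = x := by
    intro x
    by_cases hx : x % n = i % n
    · have h1' : (x + 1) % n = (i + 1) % n := hstep x i hx
      rw [hs x, if_pos hx, hs (x + 1),
        if_neg (by rw [h1']; exact Ne.symm hmodne), if_pos h1']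
      ring
    · by_cases hx' : x % n = (i + 1) % n
      · have h2' : (x - 1) % n = i % n := by
          have h := hsub x (i + 1) hx'
          have he : i + 1 - 1 = i := by ring
          rwa [he] at h
        rw [hs x, if_neg hx, if_pos hx', hs (x - 1), if_pos h2']
        ring
      · rw [hs x, if_neg hx, if_neg hx', hs x, if_neg hx, if_neg hx']
  refine ⟨?_, ?_, ?_⟩
  · -- SP_u(i) = SP_ω(i+1)
    show ({j : ℤ | i < j ∧ 0 < ω (s i) - ω (s j) ∧ ω (s i) - ω (s j) < (m : ℤ)}).ncard
      = ({k : ℤ | i + 1 < k ∧ 0 < ω (i + 1) - ω k ∧ ω (i + 1) - ω k < (m : ℤ)}).ncard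
    rw [hsi]
    apply aux_ncard s hss (fun k => 0 < ω (i + 1) - ω k ∧ ω (i + 1) - ω k < (m : ℤ)) i (i + 1)
    · intro j hj hP
      by_cases hc : j % n = i % n
      · rw [hs j, if_pos hc]; omega
      · by_cases hc' : j % n = (i + 1) % n
        · by_cases hj1 : j = i + 1
          · exfalso
            rw [hj1, hsi1] at hP
            linarith [hP.1]
          · have hlt : i + 1 < j := by omega
            have := hge j (i + 1) hc' hlt
            rw [hs j, if_neg hc, if_pos hc']
            omega
        · have : j ≠ i + 1 := fun h => hc' (by rw [h])
          rw [hs j, if_neg hc, if_neg hc']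
          omega
    · intro k hk _
      by_cases hc : k % n = i % n
      · rw [hs k, if_pos hc]; omega
      · by_cases hc' : k % n = (i + 1) % n
        · rw [hs k, if_neg hc, if_pos hc']; omega
        · rw [hs k, if_neg hc, if_neg hc']; omega
  · -- SP_u(i+1) = SP_ω(i)
    show ({j : ℤ | i + 1 < j ∧ 0 < ω (s (i + 1)) - ω (s j) ∧ ω (s (i + 1)) - ω (s j) < (m : ℤ)}).ncard
      = ({k : ℤ | i < k ∧ 0 < ω i - ω k ∧ ω i - ω k < (m : ℤ)}).ncard
    rw [hsi1]
    apply aux_ncard s hss (fun k => 0 < ω i - ω k ∧ ω i - ω k < (m : ℤ)) (i + 1) i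
    · intro j hj _
      by_cases hc : j % n = i % n
      · rw [hs j, if_pos hc]; omega
      · by_cases hc' : j % n = (i + 1) % n
        · rw [hs j, if_neg hc, if_pos hc']; omega
        · rw [hs j, if_neg hc, if_neg hc']; omega
    · intro k hk hP
      by_cases hc : k % n = i % n
      · rw [hs k, if_pos hc]; omega
      · by_cases hc' : k % n = (i + 1) % n
        · by_cases hk1 : k = i + 1
          · exfalso
            rw [hk1] at hP
            linarith [hP.2]
          · have hlt : i + 1 < k := by omega
            have := hge k (i + 1) hc' hlt
            rw [hs k, if_neg hc, if_pos hc']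
            omega
        · have : k ≠ i + 1 := fun h => hc' (by rw [h])
          rw [hs k, if_neg hc, if_neg hc']
          omega
  · -- SP_u(j) = SP_ω(j) for j ≢ i, i+1
    intro j₀ hji hji1
    have hsj : s j₀ = j₀ := by rw [hs, if_neg hji, if_neg hji1]
    have hmove : ∀ k : ℤ, j₀ < k → j₀ < s k := by
      intro k hk
      by_cases hc : k % n = i % n
      · rw [hs k, if_pos hc]; omega
      · by_cases hc' : k % n = (i + 1) % n
        · have hne : k ≠ j₀ + 1 := by
            intro he
            apply hji
            exact (hstep' j₀ i (by rw [← he]; exact hc')).symm ▸ rfl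
          rw [hs k, if_neg hc, if_pos hc']
          omega
        · rw [hs k, if_neg hc, if_neg hc']; omega
    show ({k : ℤ | j₀ < k ∧ 0 < ω (s j₀) - ω (s k) ∧ ω (s j₀) - ω (s k) < (m : ℤ)}).ncard
      = ({k : ℤ | j₀ < k ∧ 0 < ω j₀ - ω k ∧ ω j₀ - ω k < (m : ℤ)}).ncard
    rw [hsj]
    apply aux_ncard s hss (fun k => 0 < ω j₀ - ω k ∧ ω j₀ - ω k < (m : ℤ)) j₀ j₀
    · intro k hk _; exact hmove k hk
    · intro k hk _; exact hmove k hk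
end

section
/- The number of finite m-stable permutations in S_n equals the multinomial coefficient n! / (n_1! n_2! ... n_m!), where n_i = floor((n-i)/m) + 1 if i ≤ n and n_i = 0 otherwise. -/
open Finset Equiv

namespace Stmt16Aux

variable {n m : ℕ}

def cls (hm : 0 < m) (x : Fin n) : Fin m := ⟨(x : ℕ) % m, Nat.mod_lt _ hm⟩

lemma cond_iff (hm : 0 < m) (ω : Equiv.Perm (Fin n)) :
    (∀ x y : Fin n, (y : ℕ) = (x : ℕ) + m → ω x < ω y) ↔
      (∀ x y : Fin n, cls hm x = cls hm y → x < y → ω x < ω y) := by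
  constructor
  · intro h x y hc hxy
    have hmod : (x:ℕ) % m = (y:ℕ) % m := congrArg Fin.val hc
    have key : ∀ k : ℕ, ∀ x y : Fin n, (y:ℕ) = (x:ℕ) + m * (k+1) → ω x < ω y := by
      intro k
      induction k with
      | zero => intro x y hy; exact h x y (by omega)
      | succ k ih =>
        intro x y hy
        have hmul : m * (k+1+1) = m*(k+1)+m := by ring
        have hz : (x:ℕ) + m < n := by have := y.isLt; omega
        exact (h x ⟨(x:ℕ) + m, hz⟩ rfl).trans (ih ⟨(x:ℕ)+m, hz⟩ y (by simp only [Fin.val_mk]; omega))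
    have hxy' : (x:ℕ) < (y:ℕ) := hxy
    have hdvd : (m : ℕ) ∣ (y:ℕ) - (x:ℕ) := (Nat.modEq_iff_dvd' hxy'.le).mp hmod
    obtain ⟨k, hk⟩ := hdvd
    have hk0 : k ≠ 0 := by rintro rfl; omega
    obtain ⟨k', rfl⟩ := Nat.exists_eq_succ_of_ne_zero hk0
    have hmul : m * Nat.succ k' = m*(k'+1) := rfl
    exact key k' x y (by omega)
  · intro h x y hy
    refine h x y ?_ ?_
    · exact Fin.ext (by simp [cls, hy, Nat.add_mod_right])
    · exact (Fin.lt_def).mpr (by omega)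

lemma count_fiber (hm : 0 < m) (r : Fin m) :
    Fintype.card {x : Fin n // cls hm x = r} =
      if (r : ℕ) + 1 ≤ n then (n - ((r:ℕ)+1)) / m + 1 else 0 := by
  by_cases hn : (r : ℕ) + 1 ≤ n
  · rw [if_pos hn]
    refine Fintype.card_congr (⟨?_, ?_, ?_, ?_⟩ :
      {x : Fin n // cls hm x = r} ≃ Fin ((n - ((r:ℕ)+1)) / m + 1)) |>.trans (Fintype.card_fin _)
    · rintro ⟨x, hx⟩
      have hx' : (x:ℕ) % m = r := congrArg Fin.val hx
      refine ⟨(x:ℕ) / m, ?_⟩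
      have h1 := Nat.div_add_mod (x:ℕ) m
      have h2 : (x:ℕ) < n := x.isLt
      have : (x:ℕ)/m ≤ (n - ((r:ℕ)+1)) / m := by
        rw [Nat.le_div_iff_mul_le hm]
        have : ((x:ℕ)/m) * m = m * ((x:ℕ)/m) := Nat.mul_comm _ _
        omega
      omega
    · rintro ⟨k, hk⟩
      have hk' : k ≤ (n - ((r:ℕ)+1)) / m := by omega
      have hmk : k * m ≤ n - ((r:ℕ)+1) := (Nat.le_div_iff_mul_le hm).mp hk'
      have hb : (r:ℕ) + m * k < n := by have : m * k = k * m := Nat.mul_comm _ _; omega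
      refine ⟨⟨(r:ℕ) + m * k, hb⟩, ?_⟩
      apply Fin.ext
      show ((r:ℕ) + m * k) % m = (r:ℕ)
      rw [Nat.add_mul_mod_self_left, Nat.mod_eq_of_lt r.isLt]
    · rintro ⟨x, hx⟩
      have hx' : (x:ℕ) % m = r := congrArg Fin.val hx
      apply Subtype.ext; apply Fin.ext
      show (r:ℕ) + m * ((x:ℕ)/m) = (x:ℕ)
      rw [← hx', Nat.mod_add_div]
    · rintro ⟨k, hk⟩
      apply Fin.ext
      show ((r:ℕ) + m * k) / m = k
      rw [Nat.add_mul_div_left _ _ hm, Nat.div_eq_of_lt r.isLt, Nat.zero_add]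
  · rw [if_neg hn]
    rw [Fintype.card_eq_zero_iff]
    constructor
    rintro ⟨x, hx⟩
    have hx' : (x:ℕ) % m = r := congrArg Fin.val hx
    have := Nat.mod_le (x:ℕ) m
    have := x.isLt
    omega

def T (hm : 0 < m) (τ : ∀ i : Fin m, Equiv.Perm {x : Fin n // cls hm x = i}) :
    Equiv.Perm (Fin n) :=
  (Equiv.sigmaFiberEquiv (cls hm)).permCongr (Equiv.sigmaCongrRight τ)

lemma cls_T (hm : 0 < m) (τ : ∀ i : Fin m, Equiv.Perm {x : Fin n // cls hm x = i})
    (x : Fin n) : cls hm (T hm τ x) = cls hm x :=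
  ((τ (cls hm x)) ⟨x, rfl⟩).2

lemma T_inj (hm : 0 < m) : Function.Injective (T (n := n) hm) := by
  intro τ₁ τ₂ h
  have h' : Equiv.sigmaCongrRight τ₁ = Equiv.sigmaCongrRight τ₂ :=
    (Equiv.sigmaFiberEquiv (cls hm)).permCongr.injective h
  funext i
  ext s
  have := congrArg (fun e : Equiv.Perm (Σ i, {x : Fin n // cls hm x = i}) => e ⟨i, s⟩) h'
  have heq : (τ₁ i) s = (τ₂ i) s := by simpa [Equiv.sigmaCongrRight] using this
  rw [heq]

lemma stable_unique (hm : 0 < m) (ω₁ ω₂ : Equiv.Perm (Fin n))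
    (h₁ : ∀ x y : Fin n, cls hm x = cls hm y → x < y → ω₁ x < ω₁ y)
    (h₂ : ∀ x y : Fin n, cls hm x = cls hm y → x < y → ω₂ x < ω₂ y)
    (π : Equiv.Perm (Fin n)) (hπ : ∀ x, cls hm (π x) = cls hm x)
    (hco : ∀ x, ω₁ x = ω₂ (π x)) : ω₁ = ω₂ := by
  ext x
  set i := cls hm x with hi
  set f : {y : Fin n // cls hm y = i} → Fin n := fun s => ω₁ s.1 with hf
  set g : {y : Fin n // cls hm y = i} → Fin n := fun s => ω₂ s.1 with hg
  have hfm : StrictMono f := fun s t hst => h₁ s.1 t.1 (s.2.trans t.2.symm) hst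
  have hgm : StrictMono g := fun s t hst => h₂ s.1 t.1 (s.2.trans t.2.symm) hst
  have hS : π '' {y : Fin n | cls hm y = i} = {y : Fin n | cls hm y = i} := by
    ext y
    constructor
    · rintro ⟨z, hz, rfl⟩; exact (hπ z).trans hz
    · intro hy
      exact ⟨π.symm y, by rw [Set.mem_setOf_eq, ← hπ (π.symm y), Equiv.apply_symm_apply]; exact hy,
        Equiv.apply_symm_apply _ _⟩
  have hrange : Set.range f = Set.range g := by
    have h1 : Set.range f = ω₁ '' {y : Fin n | cls hm y = i} := by
      ext v; constructor
      · rintro ⟨s, rfl⟩; exact ⟨s.1, s.2, rfl⟩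
      · rintro ⟨y, hy, rfl⟩; exact ⟨⟨y, hy⟩, rfl⟩
    have h2 : Set.range g = ω₂ '' {y : Fin n | cls hm y = i} := by
      ext v; constructor
      · rintro ⟨s, rfl⟩; exact ⟨s.1, s.2, rfl⟩
      · rintro ⟨y, hy, rfl⟩; exact ⟨⟨y, hy⟩, rfl⟩
    rw [h1, h2]
    calc (⇑ω₁) '' {y : Fin n | cls hm y = i}
        = (⇑ω₂ ∘ ⇑π) '' {y : Fin n | cls hm y = i} :=
          Set.image_congr fun y _ => hco y
      _ = (⇑ω₂) '' (⇑π '' {y : Fin n | cls hm y = i}) := by rw [Set.image_comp]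
      _ = (⇑ω₂) '' {y : Fin n | cls hm y = i} := by rw [hS]
  haveI : WellFoundedLT {y : Fin n // cls hm y = i} :=
    ⟨Finite.wellFounded_of_trans_of_irrefl _⟩
  have : f = g := (hfm.range_inj hgm).mp hrange
  exact congrArg Fin.val (congrFun this ⟨x, rfl⟩)

def fib (n : ℕ) (hm : 0 < m) (i : Fin m) : Finset (Fin n) :=
  univ.filter (fun x => cls hm x = i)

def sfib (hm : 0 < m) (σ : Equiv.Perm (Fin n)) (i : Fin m) : Finset (Fin n) :=
  (fib n hm i).image σ

lemma sfib_card (hm : 0 < m) (σ : Equiv.Perm (Fin n)) (i : Fin m) :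
    (sfib hm σ i).card = (fib n hm i).card :=
  Finset.card_image_of_injective _ σ.injective

def rnk (hm : 0 < m) (x : Fin n) : ℕ := ((fib n hm (cls hm x)).filter (· < x)).card

lemma mem_fib (hm : 0 < m) (x : Fin n) : x ∈ fib n hm (cls hm x) :=
  mem_filter.mpr ⟨mem_univ x, rfl⟩

lemma rnk_lt (hm : 0 < m) (x : Fin n) : rnk hm x < (fib n hm (cls hm x)).card :=
  Finset.card_lt_card (Finset.filter_ssubset.mpr ⟨x, mem_fib hm x, lt_irrefl x⟩)

def ωfun (hm : 0 < m) (σ : Equiv.Perm (Fin n)) (x : Fin n) : Fin n :=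
  ((sfib hm σ (cls hm x)).sort (· ≤ ·)).getD (rnk hm x) x

lemma rnk_lt_len (hm : 0 < m) (σ : Equiv.Perm (Fin n)) (x : Fin n) :
    rnk hm x < ((sfib hm σ (cls hm x)).sort (· ≤ ·)).length := by
  rw [Finset.length_sort, sfib_card]; exact rnk_lt hm x

lemma ωfun_mem (hm : 0 < m) (σ : Equiv.Perm (Fin n)) (x : Fin n) :
    ωfun hm σ x ∈ sfib hm σ (cls hm x) := by
  rw [ωfun, List.getD_eq_getElem _ _ (rnk_lt_len hm σ x)]
  rw [← Finset.mem_sort (α := Fin n) (· ≤ ·)]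
  exact List.getElem_mem _

lemma ωfun_mono (hm : 0 < m) (σ : Equiv.Perm (Fin n)) (x y : Fin n)
    (hc : cls hm x = cls hm y) (hxy : x < y) : ωfun hm σ x < ωfun hm σ y := by
  have hr : rnk hm x < rnk hm y := by
    have h1 : rnk hm x = ((fib n hm (cls hm y)).filter (· < x)).card := by
      rw [rnk, hc]
    rw [h1, rnk]
    apply Finset.card_lt_card
    constructor
    · intro z hz
      rw [mem_filter] at hz ⊢
      exact ⟨hz.1, hz.2.trans hxy⟩
    · intro hsub
      have hx : x ∈ (fib n hm (cls hm y)).filter (· < y) :=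
        mem_filter.mpr ⟨by rw [← hc]; exact mem_fib hm x, hxy⟩
      have := hsub hx
      rw [mem_filter] at this
      exact lt_irrefl x this.2
  have hlx := rnk_lt_len hm σ x
  have hly := rnk_lt_len hm σ y
  unfold ωfun
  rw [hc] at hlx ⊢
  rw [List.getD_eq_getElem _ _ hlx, List.getD_eq_getElem _ _ hly]
  have hsorted := Finset.sortedLT_sort (sfib hm σ (cls hm y))
  exact hsorted.getElem_lt_getElem_of_lt hr

lemma ωfun_inj (hm : 0 < m) (σ : Equiv.Perm (Fin n)) :
    Function.Injective (ωfun hm σ) := by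
  intro x y hxy
  by_cases hc : cls hm x = cls hm y
  · rcases lt_trichotomy x y with h | h | h
    · exact absurd hxy (ne_of_lt (ωfun_mono hm σ x y hc h))
    · exact h
    · exact absurd hxy.symm (ne_of_lt (ωfun_mono hm σ y x hc.symm h))
  · exfalso
    have h1 := ωfun_mem hm σ x
    have h2 := ωfun_mem hm σ y
    rw [hxy] at h1
    rw [sfib, mem_image] at h1 h2
    obtain ⟨a, ha, hav⟩ := h1
    obtain ⟨b, hb, hbv⟩ := h2
    have hab : a = b := σ.injective (hav.trans hbv.symm)
    rw [fib, mem_filter] at ha hb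
    exact hc (ha.2.symm.trans (hab ▸ hb.2))

lemma exists_decomp (hm : 0 < m) (σ : Equiv.Perm (Fin n)) :
    ∃ (ω : Equiv.Perm (Fin n)) (τ : ∀ i : Fin m, Equiv.Perm {x : Fin n // cls hm x = i}),
      (∀ x y : Fin n, cls hm x = cls hm y → x < y → ω x < ω y) ∧ ω * T hm τ = σ := by
  have hbij : Function.Bijective (ωfun hm σ) :=
    Finite.injective_iff_bijective.mp (ωfun_inj hm σ)
  set ω := Equiv.ofBijective _ hbij with hω
  have himg : ∀ i, (fib n hm i).image ω = sfib hm σ i := by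
    intro i
    apply Finset.eq_of_subset_of_card_le
    · intro v hv
      rw [mem_image] at hv
      obtain ⟨x, hx, rfl⟩ := hv
      have hcx : cls hm x = i := (mem_filter.mp hx).2
      have := ωfun_mem hm σ x
      rw [hcx] at this
      exact this
    · rw [sfib_card, Finset.card_image_of_injective _ ω.injective]
  have hsymm : ∀ x : Fin n, cls hm (ω.symm (σ x)) = cls hm x := by
    intro x
    have hmem : σ x ∈ sfib hm σ (cls hm x) :=
      mem_image_of_mem σ (mem_fib hm x)
    rw [← himg, mem_image] at hmem
    obtain ⟨a, ha, hav⟩ := hmem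
    have h2 : ω.symm (σ x) = a := by rw [← hav, Equiv.symm_apply_apply]
    rw [h2]
    exact (mem_filter.mp ha).2
  have hu : ∀ i : Fin m, Function.Bijective
      (fun s : {x : Fin n // cls hm x = i} =>
        (⟨ω.symm (σ s.1), by rw [hsymm]; exact s.2⟩ : {x : Fin n // cls hm x = i})) := by
    intro i
    apply Finite.injective_iff_bijective.mp
    intro s t hst
    apply Subtype.ext
    have := congrArg Subtype.val hst
    exact σ.injective (ω.symm.injective this)
  refine ⟨ω, fun i => Equiv.ofBijective _ (hu i), ?_, ?_⟩
  · exact fun x y hc h => ωfun_mono hm σ x y hc h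
  · apply Equiv.ext
    intro x
    have hT : T hm (fun i => Equiv.ofBijective _ (hu i)) x = ω.symm (σ x) := rfl
    rw [Equiv.Perm.mul_apply, hT, Equiv.apply_symm_apply]

end Stmt16Aux

open Stmt16Aux in
/-- The number of finite `m`-stable permutations in `S_n` (those with
`ω(x+m) > ω(x)` whenever both are defined) equals the multinomial coefficient
`n! / (n₁! ⋯ n_m!)` where `nᵢ = ⌊(n-i)/m⌋ + 1` for `i ≤ n` and `nᵢ = 0`
otherwise. -/
theorem stmt_16 (n m : ℕ) (hm : 0 < m) :
    Nat.card {ω : Equiv.Perm (Fin n) //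
        ∀ x y : Fin n, (y : ℕ) = (x : ℕ) + m → ω x < ω y} =
      Nat.factorial n /
        ∏ i ∈ Finset.Icc 1 m,
          Nat.factorial (if i ≤ n then (n - i) / m + 1 else 0) := by
  classical
  set A := {ω : Equiv.Perm (Fin n) //
      ∀ x y : Fin n, (y : ℕ) = (x : ℕ) + m → ω x < ω y} with hA
  set B := ∀ i : Fin m, Equiv.Perm {x : Fin n // cls hm x = i} with hB
  have hbij : Function.Bijective (fun p : A × B => p.1.1 * T hm p.2) := by
    constructor
    · rintro ⟨⟨ω₁, h₁⟩, τ₁⟩ ⟨⟨ω₂, h₂⟩, τ₂⟩ h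
      simp only at h
      have h₁' := (cond_iff hm ω₁).mp h₁
      have h₂' := (cond_iff hm ω₂).mp h₂
      have hπ : ∀ x, cls hm ((T hm τ₂ * (T hm τ₁)⁻¹) x) = cls hm x := by
        intro x
        rw [Equiv.Perm.mul_apply, cls_T]
        conv_rhs => rw [← (show (T hm τ₁) ((T hm τ₁)⁻¹ x) = x from Equiv.apply_symm_apply _ x)]
        rw [cls_T]
      have hco : ∀ x, ω₁ x = ω₂ ((T hm τ₂ * (T hm τ₁)⁻¹) x) := by
        intro x
        have h3 := congrArg (fun e : Equiv.Perm (Fin n) => e ((T hm τ₁)⁻¹ x)) h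
        simp only [Equiv.Perm.mul_apply] at h3 ⊢
        rw [← h3, (show (T hm τ₁) ((T hm τ₁)⁻¹ x) = x from Equiv.apply_symm_apply _ x)]
      have hωeq : ω₁ = ω₂ := stable_unique hm ω₁ ω₂ h₁' h₂' _ hπ hco
      have hT : T hm τ₁ = T hm τ₂ := by
        rw [hωeq] at h; exact mul_left_cancel h
      have hτ : τ₁ = τ₂ := T_inj hm hT
      subst hτ
      simp only [Prod.mk.injEq]
      exact ⟨Subtype.ext hωeq, trivial⟩
    · intro σ
      obtain ⟨ω, τ, hst, heq⟩ := exists_decomp hm σ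
      exact ⟨⟨⟨ω, (cond_iff hm ω).mpr hst⟩, τ⟩, heq⟩
  have hcards : Nat.card A * Nat.card B = Nat.factorial n := by
    have h1 := Nat.card_eq_of_bijective _ hbij
    rw [Nat.card_prod] at h1
    rw [h1, Nat.card_eq_fintype_card, Fintype.card_perm, Fintype.card_fin]
  have hcardB : Nat.card B =
      ∏ i ∈ Finset.Icc 1 m, Nat.factorial (if i ≤ n then (n - i) / m + 1 else 0) := by
    rw [hB, Nat.card_pi]
    have hstep : ∀ i : Fin m,
        Nat.card (Equiv.Perm {x : Fin n // cls hm x = i}) =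
          Nat.factorial (if (i:ℕ)+1 ≤ n then (n - ((i:ℕ)+1)) / m + 1 else 0) := by
      intro i
      rw [Nat.card_eq_fintype_card, Fintype.card_perm, count_fiber hm i]
    rw [Finset.prod_congr rfl (fun i _ => hstep i)]
    have h2 : ∏ i : Fin m,
        Nat.factorial (if (i:ℕ)+1 ≤ n then (n - ((i:ℕ)+1)) / m + 1 else 0) =
        ∏ j ∈ Finset.range m,
          Nat.factorial (if j+1 ≤ n then (n - (j+1)) / m + 1 else 0) := by
      exact Fin.prod_univ_eq_prod_range
        (fun j => Nat.factorial (if j+1 ≤ n then (n - (j+1)) / m + 1 else 0)) m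
    rw [h2]
    rw [show Finset.Icc 1 m = Finset.Ico 1 (m+1) from (Finset.Ico_add_one_right_eq_Icc 1 m).symm]
    rw [Finset.prod_Ico_eq_prod_range]
    simp only [Nat.add_sub_cancel]
    refine Finset.prod_congr rfl fun j _ => ?_
    rw [Nat.add_comm 1 j]
  have hP : 0 < ∏ i ∈ Finset.Icc 1 m,
      Nat.factorial (if i ≤ n then (n - i) / m + 1 else 0) :=
    Finset.prod_pos fun i _ => Nat.factorial_pos _
  rw [← hcards, hcardB, Nat.mul_div_cancel _ hP]
end
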